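/- arXiv:0803.0553 — 7 statements merged into one kernel-verified Lean document; each statement's English description precedes it below -/
import Mathlib

section
/- For any K-vector space V and multilinear maps f ∈ C^k(V), g ∈ C^m(V), h ∈ C^p(V), the Gerstenhaber products satisfy the pre-Lie identity: (f • g) • h − f • (g • h) = (−1)^{(m−1)(p−1)} ((f • h) • g − f • (h • g)). -/
set_option linter.unusedSectionVars false
set_option linter.unusedVariables false


/-- The extension of a multilinear `k`-cochain on `V` to a function on sequences,
using only the first `k` entries of the sequence. -/
def toCochain {K V : Type*} [Field K] [AddCommGroup V] [Module K V] {k : ℕ}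
    (f : MultilinearMap K (fun _ : Fin k => V) V) : (ℕ → V) → V :=
  fun x => f fun j => x j.val

/-- The Gerstenhaber product of a `k`-cochain and an `l`-cochain (cochains are
represented as functions on sequences depending only on the first `k`, resp. `l`, entries;
sequences are `0`-indexed, so the sign `(-1)^{(i-1)(l-1)}` of the paper, `1 ≤ i ≤ k`,
becomes `(-1)^{i(l-1)}`, `0 ≤ i ≤ k-1`). -/
def gerst {V : Type*} [AddCommGroup V] (k l : ℕ) (f g : (ℕ → V) → V) : (ℕ → V) → V :=
  fun x => ∑ i ∈ Finset.range k, ((-1 : ℤ) ^ (i * (l - 1))) •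
    f fun j => if j < i then x j else if j = i then g (fun s => x (i + s)) else x (j + l - 1)

/-- single substitution -/
def gS {V : Type*} (l : ℕ) (A : (ℕ → V) → V) (i : ℕ) (x : ℕ → V) : ℕ → V :=
  fun j => if j < i then x j else if j = i then A (fun s => x (i + s)) else x (j + l - 1)

/-- double (disjoint) substitution: `A` (a `q`-cochain) at slot `s`, `B` (an `r`-cochain)
at slot `t`, with `s < t`. -/
def gW {V : Type*} (q r : ℕ) (A B : (ℕ → V) → V) (s t : ℕ) (x : ℕ → V) : ℕ → V :=
  fun j => if j < s then x j else if j = s then A (fun u => x (s + u)) else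
    if j < t then x (j + q - 1) else if j = t then B (fun u => x (t + q - 1 + u)) else
    x (j + q + r - 2)

lemma gerst_eq {V : Type*} [AddCommGroup V] (k l : ℕ) (f g : (ℕ → V) → V) (x : ℕ → V) :
    gerst k l f g x = ∑ i ∈ Finset.range k, ((-1 : ℤ) ^ (i * (l - 1))) • f (gS l g i x) := rfl

section

variable {K V : Type*} [Field K] [AddCommGroup V] [Module K V]

lemma gS_lt {l i j : ℕ} {A : (ℕ → V) → V} {x : ℕ → V} (h : j < i) : gS l A i x j = x j := by
  simp only [gS]; rw [if_pos h]

lemma gS_eq {l i : ℕ} {A : (ℕ → V) → V} {x : ℕ → V} : gS l A i x i = A (fun s => x (i + s)) := by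
  simp [gS]

lemma gS_gt {l i j : ℕ} {A : (ℕ → V) → V} {x : ℕ → V} (h : i < j) : gS l A i x j = x (j + l - 1) := by
  simp only [gS]; rw [if_neg (by omega), if_neg (by omega)]

lemma tc_congr {k : ℕ} (f : MultilinearMap K (fun _ : Fin k => V) V) {y z : ℕ → V}
    (hyz : ∀ j < k, y j = z j) : toCochain f y = toCochain f z := by
  unfold toCochain; congr 1; funext j; exact hyz j j.isLt

/-- `f` with all slots except `i` filled from `v`, as a linear map in slot `i`. -/
def slotLM {k : ℕ} (f : MultilinearMap K (fun _ : Fin k => V) V) (i : Fin k) (v : ℕ → V) :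
    V →ₗ[K] V where
  toFun u := f (Function.update (fun j : Fin k => v j.val) i u)
  map_add' a b := f.map_update_add _ i a b
  map_smul' c a := f.map_update_smul _ i c a

lemma tc_slot {k : ℕ} (f : MultilinearMap K (fun _ : Fin k => V) V) (i : ℕ) (hi : i < k)
    (y v : ℕ → V) (hoff : ∀ j < k, j ≠ i → y j = v j) :
    toCochain f y = slotLM f ⟨i, hi⟩ v (y i) := by
  unfold toCochain slotLM
  dsimp only [LinearMap.coe_mk, AddHom.coe_mk]
  congr 1; funext j
  rcases eq_or_ne j (⟨i, hi⟩ : Fin k) with hji | hji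
  · subst hji; rw [Function.update_self]
  · rw [Function.update_of_ne hji]
    exact hoff j j.isLt (by simpa [Fin.ext_iff] using hji)

end

section
variable {K V : Type*} [Field K] [AddCommGroup V] [Module K V]

/-- Case `a < i`: `h` strictly before `g`. -/
lemma gP1 {k m p : ℕ} (hm : 1 ≤ m) (hp : 1 ≤ p)
    (f : MultilinearMap K (fun _ : Fin k => V) V)
    (g : MultilinearMap K (fun _ : Fin m => V) V)
    (h : MultilinearMap K (fun _ : Fin p => V) V)
    (x : ℕ → V) {a i : ℕ} (hai : a < i) :
    toCochain f (gS m (toCochain g) i (gS p (toCochain h) a x))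
      = toCochain f (gW p m (toCochain h) (toCochain g) a i x) := by
  apply tc_congr
  intro j hj
  rcases lt_trichotomy j i with hji | rfl | hji
  · rw [gS_lt hji]
    rcases lt_trichotomy j a with hja | rfl | hja
    · rw [gS_lt hja]; unfold gW; rw [if_pos hja]
    · rw [gS_eq]; unfold gW; rw [if_neg (lt_irrefl _), if_pos rfl]
    · rw [gS_gt hja]; unfold gW
      rw [if_neg (by omega), if_neg (by omega), if_pos hji]
  · rw [gS_eq]; unfold gW
    rw [if_neg (by omega), if_neg (by omega), if_neg (lt_irrefl _), if_pos rfl]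
    congr 1; funext s
    rw [gS_gt (by omega)]
    congr 1; omega
  · rw [gS_gt hji, gS_gt (by omega)]
    unfold gW
    rw [if_neg (by omega), if_neg (by omega), if_neg (by omega), if_neg (by omega)]
    congr 1; omega

/-- Case `a = j + m - 1`, `i < j`: `h` strictly after `g`. -/
lemma gP3 {k m p : ℕ} (hm : 1 ≤ m) (hp : 1 ≤ p)
    (f : MultilinearMap K (fun _ : Fin k => V) V)
    (g : MultilinearMap K (fun _ : Fin m => V) V)
    (h : MultilinearMap K (fun _ : Fin p => V) V)
    (x : ℕ → V) {i j : ℕ} (hij : i < j) :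
    toCochain f (gS m (toCochain g) i (gS p (toCochain h) (j + m - 1) x))
      = toCochain f (gW m p (toCochain g) (toCochain h) i j x) := by
  apply tc_congr
  intro j' hj'
  rcases lt_trichotomy j' i with h1 | rfl | h1
  · rw [gS_lt h1, gS_lt (by omega)]; unfold gW; rw [if_pos h1]
  · rw [gS_eq]; unfold gW
    rw [if_neg (lt_irrefl _), if_pos rfl]
    apply tc_congr
    intro s hs
    rw [gS_lt (by omega)]
  · rcases lt_trichotomy j' j with h2 | rfl | h2
    · rw [gS_gt h1, gS_lt (by omega)]
      unfold gW
      rw [if_neg (by omega), if_neg (by omega), if_pos h2]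
    · rw [gS_gt h1, gS_eq]
      unfold gW
      rw [if_neg (by omega), if_neg (by omega), if_neg (lt_irrefl _), if_pos rfl]
    · rw [gS_gt h1, gS_gt (by omega)]
      unfold gW
      rw [if_neg (by omega), if_neg (by omega), if_neg (by omega), if_neg (by omega)]
      congr 1; omega

/-- Case `a = i + c`, `c < m`: `h` nested inside `g`. -/
lemma gP2 {k m p : ℕ} (hm : 1 ≤ m) (hp : 1 ≤ p)
    (f : MultilinearMap K (fun _ : Fin k => V) V)
    (g : MultilinearMap K (fun _ : Fin m => V) V)
    (h : MultilinearMap K (fun _ : Fin p => V) V)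
    (x : ℕ → V) {i c : ℕ} (hik : i < k) (hc : c < m) :
    toCochain f (gS m (toCochain g) i (gS p (toCochain h) (i + c) x))
      = slotLM f ⟨i, hik⟩ (gS (m + p - 1) (gerst m p (toCochain g) (toCochain h)) i x)
          (toCochain g (gS p (toCochain h) c (fun s => x (i + s)))) := by
  have hval : gS m (toCochain g) i (gS p (toCochain h) (i + c) x) i
      = toCochain g (gS p (toCochain h) c (fun s => x (i + s))) := by
    rw [gS_eq]
    congr 1; funext s
    rcases lt_trichotomy s c with hsc | rfl | hsc
    · rw [gS_lt (show i + s < i + c by omega), gS_lt hsc]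
    · rw [gS_eq, gS_eq]
      congr 1; funext t; congr 1; omega
    · rw [gS_gt (show i + c < i + s by omega), gS_gt hsc]
      congr 1; omega
  rw [← hval]
  apply tc_slot
  intro j hjk hji
  rcases lt_or_gt_of_ne hji with h1 | h1
  · rw [gS_lt h1, gS_lt (by omega), gS_lt h1]
  · rw [gS_gt h1, gS_gt (show i + c < j + m - 1 by omega), gS_gt h1]
    congr 1; omega

end

lemma range_split {M : Type*} [AddCommMonoid M] {i m km : ℕ} (h1 : i + m ≤ km) (φ : ℕ → M) :
    ∑ a ∈ Finset.range km, φ a = (∑ a ∈ Finset.range i, φ a)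
      + (∑ a ∈ Finset.Ico i (i + m), φ a) + (∑ a ∈ Finset.Ico (i + m) km, φ a) := by
  rw [Finset.range_eq_Ico, ← Finset.sum_Ico_consecutive φ (Nat.zero_le (i + m)) h1,
    ← Finset.sum_Ico_consecutive φ (Nat.zero_le i) (Nat.le_add_right i m), Finset.range_eq_Ico]

lemma sgn2 (e q : ℕ) : ((-1 : ℤ)) ^ (e + 2 * q) = (-1 : ℤ) ^ e := by
  rw [pow_add, pow_mul, neg_one_sq, one_pow, mul_one]

section
variable {K V : Type*} [Field K] [AddCommGroup V] [Module K V]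

lemma inner_split {k m p : ℕ} (hm : 1 ≤ m) (hp : 1 ≤ p)
    (f : MultilinearMap K (fun _ : Fin k => V) V)
    (g : MultilinearMap K (fun _ : Fin m => V) V)
    (h : MultilinearMap K (fun _ : Fin p => V) V)
    (x : ℕ → V) {i : ℕ} (hik : i < k) :
    ∑ a ∈ Finset.range (k + m - 1), ((-1 : ℤ) ^ (a * (p - 1) + i * (m - 1))) •
        toCochain f (gS m (toCochain g) i (gS p (toCochain h) a x))
      = ((-1 : ℤ) ^ (i * ((m + p - 1) - 1))) •
          toCochain f (gS (m + p - 1) (gerst m p (toCochain g) (toCochain h)) i x)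
        + (∑ a ∈ Finset.range i, ((-1 : ℤ) ^ (a * (p - 1) + i * (m - 1))) •
            toCochain f (gW p m (toCochain h) (toCochain g) a i x))
        + (∑ j ∈ Finset.Ico (i + 1) k, ((-1 : ℤ) ^ ((j + m - 1) * (p - 1) + i * (m - 1))) •
            toCochain f (gW m p (toCochain g) (toCochain h) i j x)) := by
  rw [range_split (show i + m ≤ k + m - 1 by omega)]
  have h1 : (∑ a ∈ Finset.range i, ((-1 : ℤ) ^ (a * (p - 1) + i * (m - 1))) •
        toCochain f (gS m (toCochain g) i (gS p (toCochain h) a x)))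
      = ∑ a ∈ Finset.range i, ((-1 : ℤ) ^ (a * (p - 1) + i * (m - 1))) •
        toCochain f (gW p m (toCochain h) (toCochain g) a i x) :=
    Finset.sum_congr rfl fun a ha => by
      rw [gP1 hm hp f g h x (Finset.mem_range.mp ha)]
  have h2 : (∑ a ∈ Finset.Ico i (i + m), ((-1 : ℤ) ^ (a * (p - 1) + i * (m - 1))) •
        toCochain f (gS m (toCochain g) i (gS p (toCochain h) a x)))
      = ((-1 : ℤ) ^ (i * ((m + p - 1) - 1))) •
          toCochain f (gS (m + p - 1) (gerst m p (toCochain g) (toCochain h)) i x) := by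
    rw [Finset.sum_Ico_eq_sum_range]
    rw [show i + m - i = m by omega]
    have hterm : ∀ c ∈ Finset.range m,
        ((-1 : ℤ) ^ ((i + c) * (p - 1) + i * (m - 1))) •
            toCochain f (gS m (toCochain g) i (gS p (toCochain h) (i + c) x))
          = ((-1 : ℤ) ^ (i * ((m + p - 1) - 1))) •
              (slotLM f ⟨i, hik⟩ (gS (m + p - 1) (gerst m p (toCochain g) (toCochain h)) i x)
                (((-1 : ℤ) ^ (c * (p - 1))) •
                  toCochain g (gS p (toCochain h) c (fun s => x (i + s))))) := by
      intro c hc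
      rw [gP2 hm hp f g h x hik (Finset.mem_range.mp hc), map_zsmul, smul_smul, ← pow_add]
      congr 2
      obtain ⟨m', rfl⟩ : ∃ m', m = m' + 1 := ⟨m - 1, by omega⟩
      obtain ⟨p', rfl⟩ : ∃ p', p = p' + 1 := ⟨p - 1, by omega⟩
      have e1 : m' + 1 - 1 = m' := by omega
      have e2 : p' + 1 - 1 = p' := by omega
      have e3 : m' + 1 + (p' + 1) - 1 - 1 = m' + p' := by omega
      rw [e1, e2, e3]
      ring
    rw [Finset.sum_congr rfl hterm, ← Finset.smul_sum, ← map_sum]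
    congr 1
    have hback := tc_slot f i hik (gS (m + p - 1) (gerst m p (toCochain g) (toCochain h)) i x)
      (gS (m + p - 1) (gerst m p (toCochain g) (toCochain h)) i x) (fun _ _ _ => rfl)
    rw [gS_eq] at hback
    exact hback.symm
  have h3 : (∑ a ∈ Finset.Ico (i + m) (k + m - 1), ((-1 : ℤ) ^ (a * (p - 1) + i * (m - 1))) •
        toCochain f (gS m (toCochain g) i (gS p (toCochain h) a x)))
      = ∑ j ∈ Finset.Ico (i + 1) k, ((-1 : ℤ) ^ ((j + m - 1) * (p - 1) + i * (m - 1))) •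
          toCochain f (gW m p (toCochain g) (toCochain h) i j x) := by
    rw [Finset.sum_Ico_eq_sum_range, Finset.sum_Ico_eq_sum_range,
      show k + m - 1 - (i + m) = k - (i + 1) by omega]
    refine Finset.sum_congr rfl fun c hc => ?_
    rw [show i + m + c = (i + 1 + c) + m - 1 by omega,
      gP3 hm hp f g h x (show i < i + 1 + c by omega)]
  rw [h1, h2, h3]
  abel

lemma gkey {k m p : ℕ} (hm : 1 ≤ m) (hp : 1 ≤ p)
    (f : MultilinearMap K (fun _ : Fin k => V) V)
    (g : MultilinearMap K (fun _ : Fin m => V) V)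
    (h : MultilinearMap K (fun _ : Fin p => V) V)
    (x : ℕ → V) :
    gerst (k + m - 1) p (gerst k m (toCochain f) (toCochain g)) (toCochain h) x
      = gerst k (m + p - 1) (toCochain f) (gerst m p (toCochain g) (toCochain h)) x
        + (∑ i ∈ Finset.range k, ∑ a ∈ Finset.range i,
            ((-1 : ℤ) ^ (a * (p - 1) + i * (m - 1))) •
              toCochain f (gW p m (toCochain h) (toCochain g) a i x))
        + (∑ i ∈ Finset.range k, ∑ j ∈ Finset.Ico (i + 1) k,
            ((-1 : ℤ) ^ ((j + m - 1) * (p - 1) + i * (m - 1))) •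
              toCochain f (gW m p (toCochain g) (toCochain h) i j x)) := by
  rw [gerst_eq (k + m - 1) p _ (toCochain h) x]
  have e1 : ∀ a ∈ Finset.range (k + m - 1),
      ((-1 : ℤ) ^ (a * (p - 1))) • gerst k m (toCochain f) (toCochain g) (gS p (toCochain h) a x)
      = ∑ i ∈ Finset.range k, ((-1 : ℤ) ^ (a * (p - 1) + i * (m - 1))) •
          toCochain f (gS m (toCochain g) i (gS p (toCochain h) a x)) := by
    intro a _
    rw [gerst_eq, Finset.smul_sum]
    exact Finset.sum_congr rfl fun i _ => by rw [smul_smul, ← pow_add]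
  rw [Finset.sum_congr rfl e1, Finset.sum_comm]
  have e2 : ∀ i ∈ Finset.range k,
      (∑ a ∈ Finset.range (k + m - 1), ((-1 : ℤ) ^ (a * (p - 1) + i * (m - 1))) •
          toCochain f (gS m (toCochain g) i (gS p (toCochain h) a x)))
      = ((-1 : ℤ) ^ (i * ((m + p - 1) - 1))) •
            toCochain f (gS (m + p - 1) (gerst m p (toCochain g) (toCochain h)) i x)
          + (∑ a ∈ Finset.range i, ((-1 : ℤ) ^ (a * (p - 1) + i * (m - 1))) •
              toCochain f (gW p m (toCochain h) (toCochain g) a i x))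
          + (∑ j ∈ Finset.Ico (i + 1) k, ((-1 : ℤ) ^ ((j + m - 1) * (p - 1) + i * (m - 1))) •
              toCochain f (gW m p (toCochain g) (toCochain h) i j x)) :=
    fun i hi => inner_split hm hp f g h x (Finset.mem_range.mp hi)
  rw [Finset.sum_congr rfl e2, Finset.sum_add_distrib, Finset.sum_add_distrib, ← gerst_eq]

end

lemma gcross1 {V : Type*} [AddCommGroup V] (k m p : ℕ) (hm : 1 ≤ m) (hp : 1 ≤ p)
    (T : ℕ → ℕ → V) :
    ∑ i ∈ Finset.range k, ∑ a ∈ Finset.range i,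
        ((-1 : ℤ) ^ (a * (p - 1) + i * (m - 1))) • T a i
      = ((-1 : ℤ) ^ ((m - 1) * (p - 1))) • ∑ i ∈ Finset.range k, ∑ j ∈ Finset.Ico (i + 1) k,
          ((-1 : ℤ) ^ ((j + p - 1) * (m - 1) + i * (p - 1))) • T i j := by
  rw [show (∑ i ∈ Finset.range k, ∑ a ∈ Finset.range i,
        ((-1 : ℤ) ^ (a * (p - 1) + i * (m - 1))) • T a i)
      = ∑ a ∈ Finset.range k, ∑ i ∈ Finset.Ico (a + 1) k,
        ((-1 : ℤ) ^ (a * (p - 1) + i * (m - 1))) • T a i from Finset.sum_comm' (by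
    intro x y; simp only [Finset.mem_range, Finset.mem_Ico]; omega), Finset.smul_sum]
  refine Finset.sum_congr rfl fun a _ => ?_
  rw [Finset.smul_sum]
  refine Finset.sum_congr rfl fun i _ => ?_
  rw [smul_smul, ← pow_add]
  congr 1
  obtain ⟨m', rfl⟩ : ∃ m', m = m' + 1 := ⟨m - 1, by omega⟩
  obtain ⟨p', rfl⟩ : ∃ p', p = p' + 1 := ⟨p - 1, by omega⟩
  have e1 : m' + 1 - 1 = m' := by omega
  have e2 : p' + 1 - 1 = p' := by omega
  have e3 : i + (p' + 1) - 1 = i + p' := by omega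
  rw [e1, e2, e3, show m' * p' + ((i + p') * m' + a * p')
    = (a * p' + i * m') + 2 * (m' * p') by ring, sgn2]

lemma gcross2 {V : Type*} [AddCommGroup V] (k m p : ℕ) (hm : 1 ≤ m) (hp : 1 ≤ p)
    (T : ℕ → ℕ → V) :
    ∑ i ∈ Finset.range k, ∑ j ∈ Finset.Ico (i + 1) k,
        ((-1 : ℤ) ^ ((j + m - 1) * (p - 1) + i * (m - 1))) • T i j
      = ((-1 : ℤ) ^ ((m - 1) * (p - 1))) • ∑ i ∈ Finset.range k, ∑ a ∈ Finset.range i,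
          ((-1 : ℤ) ^ (a * (m - 1) + i * (p - 1))) • T a i := by
  rw [show (∑ i ∈ Finset.range k, ∑ a ∈ Finset.range i,
        ((-1 : ℤ) ^ (a * (m - 1) + i * (p - 1))) • T a i)
      = ∑ a ∈ Finset.range k, ∑ i ∈ Finset.Ico (a + 1) k,
        ((-1 : ℤ) ^ (a * (m - 1) + i * (p - 1))) • T a i from Finset.sum_comm' (by
    intro x y; simp only [Finset.mem_range, Finset.mem_Ico]; omega), Finset.smul_sum]
  refine Finset.sum_congr rfl fun a _ => ?_
  rw [Finset.smul_sum]
  refine Finset.sum_congr rfl fun i _ => ?_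
  rw [smul_smul, ← pow_add]
  congr 1
  obtain ⟨m', rfl⟩ : ∃ m', m = m' + 1 := ⟨m - 1, by omega⟩
  obtain ⟨p', rfl⟩ : ∃ p', p = p' + 1 := ⟨p - 1, by omega⟩
  have e1 : m' + 1 - 1 = m' := by omega
  have e2 : p' + 1 - 1 = p' := by omega
  have e3 : i + (m' + 1) - 1 = i + m' := by omega
  rw [e1, e2, e3]
  ring


/-- the pre-Lie identity for Gerstenhaber products:
`(f • g) • h − f • (g • h) = (−1)^{(m−1)(p−1)} ((f • h) • g − f • (h • g))`. -/
theorem gerst_preLie {K V : Type*} [Field K] [CharZero K] [AddCommGroup V] [Module K V]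
    (k m p : ℕ) (hk : 1 ≤ k) (hm : 1 ≤ m) (hp : 1 ≤ p)
    (f : MultilinearMap K (fun _ : Fin k => V) V)
    (g : MultilinearMap K (fun _ : Fin m => V) V)
    (h : MultilinearMap K (fun _ : Fin p => V) V) :
    gerst (k + m - 1) p (gerst k m (toCochain f) (toCochain g)) (toCochain h)
      - gerst k (m + p - 1) (toCochain f) (gerst m p (toCochain g) (toCochain h))
    = ((-1 : ℤ) ^ ((m - 1) * (p - 1))) •
        (gerst (k + p - 1) m (gerst k p (toCochain f) (toCochain h)) (toCochain g)
          - gerst k (p + m - 1) (toCochain f) (gerst p m (toCochain h) (toCochain g))) := by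
  funext x
  simp only [Pi.sub_apply, Pi.smul_apply]
  rw [gkey hm hp f g h x, gkey hp hm f h g x]
  have habel : ∀ B X Y : V, (B + X + Y) - B = X + Y := fun B X Y => by abel
  rw [habel, habel, smul_add, gcross1 k m p hm hp
      (fun a i => toCochain f (gW p m (toCochain h) (toCochain g) a i x)),
    gcross2 k m p hm hp
      (fun i j => toCochain f (gW m p (toCochain g) (toCochain h) i j x))]
  abel
end

section
/- Let n be an odd positive integer and let (V, μ) be an n-ary partially associative algebra over a field K of characteristic zero. Then for every k ≥ 2 and every multilinear map φ ∈ C^k(V), ((φ • μ) • μ)(x_1,…,x_{k+2n−2}) = 2 Σ_{1 ≤ p ≤ q−n ≤ k−1} φ(x_1,…,x_{p−1}, μ(x_p,…,x_{p+n−1}), x_{p+n},…,x_{q−1}, μ(x_q,…,x_{q+n−1}), x_{q+n},…,x_{k+2n−2}), where the sum is over pairs of integers (p,q) with 1 ≤ p, p + n ≤ q and q ≤ k + n − 1. -/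
/-- A term of the sum appearing in Lemma 2: `φ` evaluated on the sequence `x` in which
two disjoint `μ`-windows have been inserted, at the (0-indexed) argument slots
`p < q` of `φ`; the window of the first `μ` starts at `x`-position `p` and the window of
the second `μ` starts at `x`-position `q + n - 1`.  (In the 1-indexed notation of the paper
this is `φ(x_1,…,x_{p-1}, μ(x_p,…,x_{p+n-1}), x_{p+n},…, μ(x_q,…,x_{q+n-1}), …, x_{k+2n-2})`.) -/
def twoSub {V : Type*} (n : ℕ) (φ μ : (ℕ → V) → V) (p q : ℕ) : (ℕ → V) → V :=
  fun x => φ fun j =>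
    if j < p then x j
    else if j = p then μ (fun s => x (p + s))
    else if j < q then x (j + n - 1)
    else if j = q then μ (fun s => x (j + n - 1 + s))
    else x (j + 2 * n - 2)

set_option linter.unusedSectionVars false
set_option linter.unusedTactic false
set_option linter.unreachableTactic false

namespace GerstAux

/-- Insertion of the window `g` at slot `i`. -/
def ins {V : Type*} (n i : ℕ) (g : (ℕ → V) → V) (x : ℕ → V) : ℕ → V :=
  fun m => if m < i then x m else if m = i then g (fun s => x (i + s)) else x (m + n - 1)

variable {K V : Type*} [Field K] [AddCommGroup V] [Module K V]

lemma toCochain_congr {k : ℕ} (f : MultilinearMap K (fun _ : Fin k => V) V)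
    {x y : ℕ → V} (h : ∀ j, j < k → x j = y j) : toCochain f x = toCochain f y := by
  unfold toCochain; congr 1; funext j; exact h j j.isLt

variable {n k : ℕ} (hn' : 1 ≤ n)
  (μ : MultilinearMap K (fun _ : Fin n => V) V)
  (φ : MultilinearMap K (fun _ : Fin k => V) V) (x : ℕ → V)

include hn'

lemma termA {i p : ℕ} (hip : i < p) :
    toCochain φ (ins n p (toCochain μ) (ins n i (toCochain μ) x))
      = twoSub n (toCochain φ) (toCochain μ) i p x := by
  unfold twoSub
  apply toCochain_congr
  intro j hj
  simp only [ins]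
  split_ifs with h1 h2 h3 h4 h5 h6 h7 h8 h9 h10 h11 h12 <;>
    first
      | rfl
      | (exfalso; omega)
      | (congr 1; omega)
      | (apply toCochain_congr μ; intro s hs;
         try simp only [ins];
         first
           | rfl
           | (congr 1; omega)
           | (split_ifs <;> first | rfl | (exfalso; omega) | (congr 1; omega)))

lemma termC {p q : ℕ} (hpq : p < q) :
    toCochain φ (ins n p (toCochain μ) (ins n (q + n - 1) (toCochain μ) x))
      = twoSub n (toCochain φ) (toCochain μ) p q x := by
  unfold twoSub
  apply toCochain_congr
  intro j hj
  simp only [ins]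
  split_ifs <;>
    first
      | rfl
      | (exfalso; omega)
      | (congr 1; omega)
      | (apply toCochain_congr μ; intro s hs;
         try simp only [ins];
         first
           | rfl
           | (congr 1; omega)
           | (split_ifs <;> first | rfl | (exfalso; omega) | (congr 1; omega)))

lemma termB {p t : ℕ} (ht : t < n) :
    toCochain φ (ins n p (toCochain μ) (ins n (p + t) (toCochain μ) x))
      = toCochain φ (Function.update (fun j => if j < p then x j else x (j + 2 * n - 2)) p
          (toCochain μ (ins n t (toCochain μ) (fun m => x (p + m))))) := by
  apply toCochain_congr
  intro j hj
  rw [Function.update_apply]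
  simp only [ins]
  split_ifs <;>
    first
      | rfl
      | (exfalso; omega)
      | (congr 1; omega)
      | (apply toCochain_congr μ; intro s hs;
         try simp only [ins];
         first
           | rfl
           | (congr 1; omega)
           | (split_ifs <;>
               first
                 | rfl
                 | (exfalso; omega)
                 | (congr 1; omega)
                 | (apply toCochain_congr μ; intro u hu; congr 1; omega)))

omit hn' in
lemma toCochain_update {p : ℕ} (hp : p < k) (y : ℕ → V) (v : V) :
    toCochain φ (Function.update y p v)
      = φ (Function.update (fun j : Fin k => y j.val) ⟨p, hp⟩ v) := by
  unfold toCochain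
  congr 1
  funext j
  simp [Function.update_apply, Fin.ext_iff]

end GerstAux

open GerstAux in
/-- if `n` is odd and `(V, μ)` is an `n`-ary partially associative algebra,
then for any `k`-cochain `φ` (`k ≥ 2`), `(φ • μ) • μ` equals twice the sum over pairs of
disjoint positions of the insertion of two copies of `μ` in the arguments of `φ`. -/
theorem gerst_phi_mu_mu_of_odd {K V : Type*} [Field K] [CharZero K]
    [AddCommGroup V] [Module K V]
    (n : ℕ) (hn : Odd n) (hn' : 1 ≤ n)
    (μ : MultilinearMap K (fun _ : Fin n => V) V)
    (hμ : gerst n n (toCochain μ) (toCochain μ) = 0)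
    (k : ℕ) (hk : 2 ≤ k)
    (φ : MultilinearMap K (fun _ : Fin k => V) V) :
    gerst (k + n - 1) n (gerst k n (toCochain φ) (toCochain μ)) (toCochain μ)
      = (2 : ℤ) • ∑ q ∈ Finset.range k, ∑ p ∈ Finset.range q,
          twoSub n (toCochain φ) (toCochain μ) p q := by
  classical
  have hev : Even (n - 1) := Nat.Odd.sub_odd hn odd_one
  have e0 : ∀ (m : ℕ) (f g : (ℕ → V) → V) (y : ℕ → V),
      gerst m n f g y = ∑ i ∈ Finset.range m, f (GerstAux.ins n i g y) := by
    intro m f g y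
    unfold gerst GerstAux.ins
    refine Finset.sum_congr rfl fun i _ => ?_
    rw [(hev.mul_left i).neg_one_pow, one_smul]
  funext x
  have lhs1 : gerst (k + n - 1) n (gerst k n (toCochain φ) (toCochain μ)) (toCochain μ) x
      = ∑ p ∈ Finset.range k, ∑ i ∈ Finset.range (k + n - 1),
          toCochain φ (ins n p (toCochain μ) (ins n i (toCochain μ) x)) := by
    rw [e0]
    simp only [e0]
    exact Finset.sum_comm
  have key : ∀ p ∈ Finset.range k,
      (∑ i ∈ Finset.range (k + n - 1),
          toCochain φ (ins n p (toCochain μ) (ins n i (toCochain μ) x)))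
      = (∑ i ∈ Finset.range p, twoSub n (toCochain φ) (toCochain μ) i p x)
        + ∑ q ∈ Finset.Ico (p + 1) k, twoSub n (toCochain φ) (toCochain μ) p q x := by
    intro p hp
    rw [Finset.mem_range] at hp
    have h1 : p ≤ p + n := by omega
    have h2 : p + n ≤ k + n - 1 := by omega
    rw [show Finset.range (k + n - 1) = Finset.Ico 0 (k + n - 1) from Finset.range_eq_Ico _,
        ← Finset.sum_Ico_consecutive _ (Nat.zero_le p) (le_trans h1 h2),
        ← Finset.sum_Ico_consecutive _ h1 h2]
    have partA : (∑ i ∈ Finset.Ico 0 p,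
        toCochain φ (ins n p (toCochain μ) (ins n i (toCochain μ) x)))
        = ∑ i ∈ Finset.range p, twoSub n (toCochain φ) (toCochain μ) i p x := by
      rw [← Finset.range_eq_Ico]
      exact Finset.sum_congr rfl fun i hi =>
        termA hn' μ φ x (Finset.mem_range.mp hi)
    have partB : (∑ i ∈ Finset.Ico p (p + n),
        toCochain φ (ins n p (toCochain μ) (ins n i (toCochain μ) x))) = 0 := by
      rw [Finset.sum_Ico_eq_sum_range]
      simp only [add_tsub_cancel_left]
      have hNsum : (∑ t ∈ Finset.range n,
          toCochain μ (ins n t (toCochain μ) (fun m => x (p + m)))) = 0 := by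
        rw [← e0, hμ]
        rfl
      calc (∑ t ∈ Finset.range n,
              toCochain φ (ins n p (toCochain μ) (ins n (p + t) (toCochain μ) x)))
          = ∑ t ∈ Finset.range n,
              toCochain φ (Function.update
                (fun j => if j < p then x j else x (j + 2 * n - 2)) p
                (toCochain μ (ins n t (toCochain μ) (fun m => x (p + m))))) :=
            Finset.sum_congr rfl fun t ht => termB hn' μ φ x (Finset.mem_range.mp ht)
        _ = ∑ t ∈ Finset.range n,
              φ (Function.update
                (fun j : Fin k => if j.val < p then x j.val else x (j.val + 2 * n - 2))
                ⟨p, hp⟩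
                (toCochain μ (ins n t (toCochain μ) (fun m => x (p + m))))) :=
            Finset.sum_congr rfl fun t _ => toCochain_update φ hp _ _
        _ = φ (Function.update
                (fun j : Fin k => if j.val < p then x j.val else x (j.val + 2 * n - 2))
                ⟨p, hp⟩
                (∑ t ∈ Finset.range n,
                  toCochain μ (ins n t (toCochain μ) (fun m => x (p + m))))) :=
            (φ.map_update_sum _ _ _ _).symm
        _ = 0 := by rw [hNsum]; exact φ.map_update_zero _ _
    have partC : (∑ i ∈ Finset.Ico (p + n) (k + n - 1),
        toCochain φ (ins n p (toCochain μ) (ins n i (toCochain μ) x)))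
        = ∑ q ∈ Finset.Ico (p + 1) k, twoSub n (toCochain φ) (toCochain μ) p q x := by
      rw [Finset.sum_Ico_eq_sum_range, Finset.sum_Ico_eq_sum_range]
      have hc : k + n - 1 - (p + n) = k - (p + 1) := by omega
      rw [hc]
      refine Finset.sum_congr rfl fun t ht => ?_
      have hqt : p + n + t = (p + 1 + t) + n - 1 := by omega
      rw [hqt]
      exact termC hn' μ φ x (by omega)
    rw [partA, partB, partC, zero_add]
  rw [lhs1, Finset.sum_congr rfl key, Finset.sum_add_distrib]
  have hswap : (∑ p ∈ Finset.range k, ∑ q ∈ Finset.Ico (p + 1) k,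
      twoSub n (toCochain φ) (toCochain μ) p q x)
      = ∑ q ∈ Finset.range k, ∑ p ∈ Finset.range q,
          twoSub n (toCochain φ) (toCochain μ) p q x := by
    refine Finset.sum_comm' ?_
    intro a b
    simp only [Finset.mem_range, Finset.mem_Ico]
    omega
  rw [hswap]
  simp only [Pi.smul_apply, Finset.sum_apply, two_zsmul]
end

section
/- Let n be an odd positive integer and let (V, μ) be an n-ary partially associative algebra over a field K of characteristic zero. Then for all x_1,…,x_{3n−2} ∈ V, Σ_{1 ≤ p ≤ q−n ≤ n−1} μ(x_1,…,x_{p−1}, μ(x_p,…,x_{p+n−1}), x_{p+n},…,x_{q−1}, μ(x_q,…,x_{q+n−1}), x_{q+n},…,x_{3n−2}) = 0, where the sum is over pairs of integers (p,q) with 1 ≤ p, p + n ≤ q and q ≤ 2n − 1. -/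
set_option linter.unreachableTactic false
set_option linter.unusedTactic false


section Aux

variable {K V : Type*} [Field K] [AddCommGroup V] [Module K V]

/-- Insertion of a `μ`-window at slot `p` into a sequence. -/
def insSeq {V : Type*} (n p : ℕ) (μ' : (ℕ → V) → V) (x : ℕ → V) : ℕ → V :=
  fun j => if j < p then x j else if j = p then μ' (fun s => x (p + s)) else x (j + n - 1)

/-- A single term of `μ • μ` (without sign): `μ` with a `μ`-window at slot `p`. -/
def Sa {V : Type*} (n : ℕ) (μ' : (ℕ → V) → V) (p : ℕ) (z : ℕ → V) : V :=
  μ' (insSeq n p μ' z)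

/-- `μ` with the single value `v` at slot `q`, other slots taken from `x` with a
gap of `2n-2`. -/
def Dv {V : Type*} (n q : ℕ) (μ' : (ℕ → V) → V) (v : V) (x : ℕ → V) : V :=
  μ' (fun j => if j < q then x j else if j = q then v else x (j + 2 * n - 2))

lemma toCochain_congr {k : ℕ} (f : MultilinearMap K (fun _ : Fin k => V) V)
    {x y : ℕ → V} (h : ∀ j, j < k → x j = y j) : toCochain f x = toCochain f y :=
  congrArg f (funext fun j => h j j.isLt)

variable {n : ℕ} (μ : MultilinearMap K (fun _ : Fin n => V) V)

lemma sum_Sa (hn : Odd n) (hμ : gerst n n (toCochain μ) (toCochain μ) = 0) (z : ℕ → V) :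
    ∑ p ∈ Finset.range n, Sa n (toCochain μ) p z = 0 := by
  have h := congrFun hμ z
  simp only [gerst, Pi.zero_apply] at h
  rw [← h]
  refine Finset.sum_congr rfl fun i _ => ?_
  rw [show ((-1 : ℤ) ^ (i * (n - 1))) = 1 from
    Even.neg_one_pow ((Nat.Odd.sub_odd hn odd_one).mul_left i), one_smul]
  rfl

lemma key1 (hn' : 1 ≤ n) {p q : ℕ} (hpq : p < q) (hq : q < n) (x : ℕ → V) :
    twoSub n (toCochain μ) (toCochain μ) p q x
      = Sa n (toCochain μ) q (insSeq n p (toCochain μ) x) := by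
  unfold twoSub Sa insSeq
  refine toCochain_congr μ fun j hj => ?_
  try dsimp only
  split_ifs <;>
    first
      | rfl
      | omega
      | exact congrArg x (by omega)
      | (refine toCochain_congr μ fun s hs => ?_
         try dsimp only
         first
         | rfl
         | exact congrArg x (by omega)
         | (split_ifs <;>
             first
               | rfl
               | omega
               | exact congrArg x (by omega)
               | (refine toCochain_congr μ fun t ht => ?_
                  try dsimp only
                  first
             | rfl
             | exact congrArg x (by omega)
             | (split_ifs <;> first | rfl | omega | exact congrArg x (by omega)))))

lemma key2 (hn' : 1 ≤ n) {p q : ℕ} (hqp : q ≤ p) (hp : p < n) (x : ℕ → V) :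
    Sa n (toCochain μ) q (insSeq n p (toCochain μ) x)
      = Dv n q (toCochain μ) (Sa n (toCochain μ) (p - q) (fun s => x (q + s))) x := by
  unfold Sa Dv insSeq
  refine toCochain_congr μ fun j hj => ?_
  try dsimp only
  split_ifs <;>
    first
      | rfl
      | omega
      | exact congrArg x (by omega)
      | (refine toCochain_congr μ fun s hs => ?_
         try dsimp only
         first
         | rfl
         | exact congrArg x (by omega)
         | (split_ifs <;>
             first
               | rfl
               | omega
               | exact congrArg x (by omega)
               | (refine toCochain_congr μ fun t ht => ?_
                  try dsimp only
                  first
             | rfl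
             | exact congrArg x (by omega)
             | (split_ifs <;> first | rfl | omega | exact congrArg x (by omega)))))

lemma key1' (hn' : 1 ≤ n) {p q : ℕ} (hpq : p < q) (hq : q < n) (x : ℕ → V) :
    twoSub n (toCochain μ) (toCochain μ) p q x
      = Sa n (toCochain μ) p (insSeq n (q + n - 1) (toCochain μ) x) := by
  unfold twoSub Sa insSeq
  refine toCochain_congr μ fun j hj => ?_
  try dsimp only
  split_ifs <;>
    first
      | rfl
      | omega
      | exact congrArg x (by omega)
      | (refine toCochain_congr μ fun s hs => ?_
         try dsimp only
         first
         | rfl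
         | exact congrArg x (by omega)
         | (split_ifs <;>
             first
               | rfl
               | omega
               | exact congrArg x (by omega)
               | (refine toCochain_congr μ fun t ht => ?_
                  try dsimp only
                  first
             | rfl
             | exact congrArg x (by omega)
             | (split_ifs <;> first | rfl | omega | exact congrArg x (by omega)))))

lemma key2' (hn' : 1 ≤ n) {p q : ℕ} (hqp : q ≤ p) (hp : p < n) (x : ℕ → V) :
    Sa n (toCochain μ) p (insSeq n (q + n - 1) (toCochain μ) x)
      = Dv n p (toCochain μ) (Sa n (toCochain μ) (q + n - 1 - p) (fun s => x (p + s))) x := by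
  unfold Sa Dv insSeq
  refine toCochain_congr μ fun j hj => ?_
  try dsimp only
  split_ifs <;>
    first
      | rfl
      | omega
      | exact congrArg x (by omega)
      | (refine toCochain_congr μ fun s hs => ?_
         try dsimp only
         first
         | rfl
         | exact congrArg x (by omega)
         | (split_ifs <;>
             first
               | rfl
               | omega
               | exact congrArg x (by omega)
               | (refine toCochain_congr μ fun t ht => ?_
                  try dsimp only
                  first
             | rfl
             | exact congrArg x (by omega)
             | (split_ifs <;> first | rfl | omega | exact congrArg x (by omega)))))

lemma Dv_eq {q : ℕ} (hq : q < n) (v : V) (x : ℕ → V) :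
    Dv n q (toCochain μ) v x
      = μ (Function.update
          (fun j : Fin n => if (j : ℕ) < q then x j else x ((j : ℕ) + 2 * n - 2)) ⟨q, hq⟩ v) := by
  unfold Dv toCochain
  congr 1
  funext j
  simp only [Function.update_apply, Fin.ext_iff]
  split_ifs <;> first | rfl | omega

lemma Dv_sum {ι : Type*} {q : ℕ} (hq : q < n) (s : Finset ι) (f : ι → V) (x : ℕ → V) :
    Dv n q (toCochain μ) (∑ r ∈ s, f r) x = ∑ r ∈ s, Dv n q (toCochain μ) (f r) x := by
  simp only [Dv_eq μ hq]
  exact μ.map_update_sum s ⟨q, hq⟩ f _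

lemma Dv_neg {q : ℕ} (hq : q < n) (v : V) (x : ℕ → V) :
    Dv n q (toCochain μ) (-v) x = - Dv n q (toCochain μ) v x := by
  rw [Dv_eq μ hq, Dv_eq μ hq, ← MultilinearMap.toLinearMap_apply,
    ← MultilinearMap.toLinearMap_apply, map_neg]

end Aux

/-- if `n` is odd and `(V, μ)` is an `n`-ary partially associative algebra,
then `Σ_{1 ≤ p ≤ q−n ≤ n−1} μ(x_1,…, μ(x_p,…,x_{p+n−1}), …, μ(x_q,…,x_{q+n−1}), …, x_{3n−2}) = 0`. -/
theorem mu_theta_mu_eq_zero_of_odd {K V : Type*} [Field K] [CharZero K]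
    [AddCommGroup V] [Module K V]
    (n : ℕ) (hn : Odd n) (hn' : 1 ≤ n)
    (μ : MultilinearMap K (fun _ : Fin n => V) V)
    (hμ : gerst n n (toCochain μ) (toCochain μ) = 0) :
    ∑ q ∈ Finset.range n, ∑ p ∈ Finset.range q,
        twoSub n (toCochain μ) (toCochain μ) p q = 0 := by
  classical
  funext x
  simp only [Finset.sum_apply, Pi.zero_apply]
  set μ' : (ℕ → V) → V := toCochain μ with hμ'def
  have hS : ∀ z : ℕ → V, ∑ p ∈ Finset.range n, Sa n μ' p z = 0 := sum_Sa μ hn hμ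
  set T : V := ∑ q ∈ Finset.range n, ∑ p ∈ Finset.range q, twoSub n μ' μ' p q x with hT
  -- Route 2
  have E2 : T = ∑ q ∈ Finset.range n, ∑ r ∈ Finset.Ico (n - q) n,
      Dv n q μ' (Sa n μ' r (fun s => x (q + s))) x := by
    calc T = ∑ q ∈ Finset.range n, ∑ p ∈ Finset.range q,
          Sa n μ' q (insSeq n p μ' x) := by
            refine Finset.sum_congr rfl fun q hq => Finset.sum_congr rfl fun p hp => ?_
            exact key1 μ hn' (Finset.mem_range.mp hp) (Finset.mem_range.mp hq) x
      _ = ∑ p ∈ Finset.range n, ∑ q ∈ Finset.Ico (p + 1) n,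
          Sa n μ' q (insSeq n p μ' x) := by
            refine Finset.sum_comm' fun q p => ?_
            simp only [Finset.mem_range, Finset.mem_Ico]
            omega
      _ = ∑ p ∈ Finset.range n, -∑ q ∈ Finset.range (p + 1),
          Sa n μ' q (insSeq n p μ' x) := by
            refine Finset.sum_congr rfl fun p hp => ?_
            have hp' := Finset.mem_range.mp hp
            have h := Finset.sum_range_add_sum_Ico
              (fun q => Sa n μ' q (insSeq n p μ' x)) (show p + 1 ≤ n by omega)
            rw [hS (insSeq n p μ' x)] at h
            exact eq_neg_of_add_eq_zero_right h
      _ = ∑ p ∈ Finset.range n, -∑ q ∈ Finset.range (p + 1),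
          Dv n q μ' (Sa n μ' (p - q) (fun s => x (q + s))) x := by
            refine Finset.sum_congr rfl fun p hp => congrArg Neg.neg
              (Finset.sum_congr rfl fun q hq => ?_)
            exact key2 μ hn' (by have := Finset.mem_range.mp hq; omega)
              (Finset.mem_range.mp hp) x
      _ = -∑ p ∈ Finset.range n, ∑ q ∈ Finset.range (p + 1),
          Dv n q μ' (Sa n μ' (p - q) (fun s => x (q + s))) x := by
            rw [Finset.sum_neg_distrib]
      _ = -∑ q ∈ Finset.range n, ∑ p ∈ Finset.Ico q n,
          Dv n q μ' (Sa n μ' (p - q) (fun s => x (q + s))) x := by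
            congr 1
            refine Finset.sum_comm' fun p q => ?_
            simp only [Finset.mem_range, Finset.mem_Ico]
            omega
      _ = -∑ q ∈ Finset.range n, ∑ r ∈ Finset.range (n - q),
          Dv n q μ' (Sa n μ' r (fun s => x (q + s))) x := by
            congr 1
            refine Finset.sum_congr rfl fun q hq => ?_
            rw [Finset.sum_Ico_eq_sum_range]
            simp only [Nat.add_sub_cancel_left]
      _ = -∑ q ∈ Finset.range n,
          Dv n q μ' (∑ r ∈ Finset.range (n - q), Sa n μ' r (fun s => x (q + s))) x := by
            congr 1
            refine Finset.sum_congr rfl fun q hq => ?_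
            exact (Dv_sum μ (Finset.mem_range.mp hq) _ _ x).symm
      _ = -∑ q ∈ Finset.range n,
          Dv n q μ' (-∑ r ∈ Finset.Ico (n - q) n, Sa n μ' r (fun s => x (q + s))) x := by
            congr 1
            refine Finset.sum_congr rfl fun q hq => ?_
            congr 1
            have h := Finset.sum_range_add_sum_Ico
              (fun r => Sa n μ' r (fun s => x (q + s))) (Nat.sub_le n q)
            rw [hS (fun s => x (q + s))] at h
            exact eq_neg_of_add_eq_zero_left h
      _ = -∑ q ∈ Finset.range n,
          -Dv n q μ' (∑ r ∈ Finset.Ico (n - q) n, Sa n μ' r (fun s => x (q + s))) x := by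
            congr 1
            refine Finset.sum_congr rfl fun q hq => ?_
            exact Dv_neg μ (Finset.mem_range.mp hq) _ x
      _ = ∑ q ∈ Finset.range n,
          Dv n q μ' (∑ r ∈ Finset.Ico (n - q) n, Sa n μ' r (fun s => x (q + s))) x := by
            rw [Finset.sum_neg_distrib, neg_neg]
      _ = ∑ q ∈ Finset.range n, ∑ r ∈ Finset.Ico (n - q) n,
          Dv n q μ' (Sa n μ' r (fun s => x (q + s))) x := by
            refine Finset.sum_congr rfl fun q hq => ?_
            exact Dv_sum μ (Finset.mem_range.mp hq) _ _ x
  -- Route 1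
  have E1 : T = -∑ p ∈ Finset.range n, ∑ r ∈ Finset.Ico (n - 1 - p) n,
      Dv n p μ' (Sa n μ' r (fun s => x (p + s))) x := by
    calc T = ∑ q ∈ Finset.range n, ∑ p ∈ Finset.range q,
          Sa n μ' p (insSeq n (q + n - 1) μ' x) := by
            refine Finset.sum_congr rfl fun q hq => Finset.sum_congr rfl fun p hp => ?_
            exact key1' μ hn' (Finset.mem_range.mp hp) (Finset.mem_range.mp hq) x
      _ = ∑ q ∈ Finset.range n, -∑ p ∈ Finset.Ico q n,
          Sa n μ' p (insSeq n (q + n - 1) μ' x) := by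
            refine Finset.sum_congr rfl fun q hq => ?_
            have hq' := Finset.mem_range.mp hq
            have h := Finset.sum_range_add_sum_Ico
              (fun p => Sa n μ' p (insSeq n (q + n - 1) μ' x)) (show q ≤ n by omega)
            rw [hS (insSeq n (q + n - 1) μ' x)] at h
            exact eq_neg_of_add_eq_zero_left h
      _ = -∑ q ∈ Finset.range n, ∑ p ∈ Finset.Ico q n,
          Dv n p μ' (Sa n μ' (q + n - 1 - p) (fun s => x (p + s))) x := by
            rw [Finset.sum_neg_distrib]
            congr 1
            refine Finset.sum_congr rfl fun q hq => Finset.sum_congr rfl fun p hp => ?_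
            have hp' := Finset.mem_Ico.mp hp
            exact key2' μ hn' hp'.1 hp'.2 x
      _ = -∑ p ∈ Finset.range n, ∑ q ∈ Finset.range (p + 1),
          Dv n p μ' (Sa n μ' (q + n - 1 - p) (fun s => x (p + s))) x := by
            congr 1
            refine Finset.sum_comm' fun q p => ?_
            simp only [Finset.mem_range, Finset.mem_Ico]
            omega
      _ = -∑ p ∈ Finset.range n, ∑ r ∈ Finset.Ico (n - 1 - p) n,
          Dv n p μ' (Sa n μ' r (fun s => x (p + s))) x := by
            congr 1
            refine Finset.sum_congr rfl fun p hp => ?_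
            have hp' := Finset.mem_range.mp hp
            rw [Finset.sum_Ico_eq_sum_range]
            rw [show n - (n - 1 - p) = p + 1 by omega]
            refine Finset.sum_congr rfl fun q hq => ?_
            have hq' := Finset.mem_range.mp hq
            rw [show q + n - 1 - p = n - 1 - p + q by omega]
  -- Combine the two routes
  have E3 : T + T = -∑ p ∈ Finset.range n,
      Dv n p μ' (Sa n μ' (n - 1 - p) (fun s => x (p + s))) x := by
    calc T + T
        = (∑ q ∈ Finset.range n, ∑ r ∈ Finset.Ico (n - q) n,
            Dv n q μ' (Sa n μ' r (fun s => x (q + s))) x)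
          + (-∑ p ∈ Finset.range n, ∑ r ∈ Finset.Ico (n - 1 - p) n,
            Dv n p μ' (Sa n μ' r (fun s => x (p + s))) x) := by rw [← E2, ← E1]
      _ = ∑ p ∈ Finset.range n,
            ((∑ r ∈ Finset.Ico (n - p) n, Dv n p μ' (Sa n μ' r (fun s => x (p + s))) x)
              - ∑ r ∈ Finset.Ico (n - 1 - p) n,
                Dv n p μ' (Sa n μ' r (fun s => x (p + s))) x) := by
            rw [Finset.sum_sub_distrib, sub_eq_add_neg]
      _ = ∑ p ∈ Finset.range n,
            -Dv n p μ' (Sa n μ' (n - 1 - p) (fun s => x (p + s))) x := by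
            refine Finset.sum_congr rfl fun p hp => ?_
            have hp' := Finset.mem_range.mp hp
            rw [Finset.sum_eq_sum_Ico_succ_bot (show n - 1 - p < n by omega)]
            rw [show n - 1 - p + 1 = n - p by omega]
            abel
      _ = -∑ p ∈ Finset.range n,
            Dv n p μ' (Sa n μ' (n - 1 - p) (fun s => x (p + s))) x := by
            rw [Finset.sum_neg_distrib]
  have E4 : ∑ p ∈ Finset.range n,
      Dv n p μ' (Sa n μ' (n - 1 - p) (fun s => x (p + s))) x = 0 := by
    have h := hS (insSeq n (n - 1) μ' x)
    rw [← h]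
    refine Finset.sum_congr rfl fun p hp => ?_
    have h2 := key2' μ hn' (Nat.zero_le p) (Finset.mem_range.mp hp) x
    simpa using h2.symm
  have h2T : (2 : K) • T = 0 := by
    rw [two_smul, E3, E4, neg_zero]
  rcases smul_eq_zero.mp h2T with h | h
  · exact absurd h two_ne_zero
  · exact h
end

section
/- Let n ≥ 3 be an odd integer, let (V, μ) be an n-ary partially associative algebra over a field K of characteristic zero, and for k ≥ 1 define ∂^k : χ^k(V) → C^{k+n−1}(V) by ∂^k(φ) = (−1)^{k−1} μ • φ − φ • μ. Then the image of ∂^k is contained in χ^{k+n−1}(V), i.e., for every φ ∈ χ^k(V) the map ∂^k(φ) again satisfies (∂^kφ • μ) • μ = 0, (μ • ∂^kφ) • μ = 0, and μ • (∂^kφ • μ) = 0. -/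
open Finset

section
variable {K V : Type*} [Field K] [AddCommGroup V] [Module K V]

lemma gerst_zero_left (k l : ℕ) (g : (ℕ → V) → V) : gerst k l (0 : (ℕ → V) → V) g = 0 := by
  funext x; simp [gerst]

lemma gerst_zsmul_left (k l : ℕ) (z : ℤ) (F g : (ℕ → V) → V) :
    gerst k l (z • F) g = z • gerst k l F g := by
  funext x
  simp only [gerst, Pi.smul_apply, Finset.smul_sum]
  exact Finset.sum_congr rfl fun i _ => smul_comm _ _ _

lemma gerst_sub_left (k l : ℕ) (F F' g : (ℕ → V) → V) :
    gerst k l (F - F') g = gerst k l F g - gerst k l F' g := by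
  funext x
  simp only [gerst, Pi.sub_apply, smul_sub, Finset.sum_sub_distrib]

lemma toCochain_ite {a : ℕ} (f : MultilinearMap K (fun _ : Fin a => V) V)
    (i : ℕ) (hi : i < a) (u v : ℕ → V) (w : V) :
    toCochain f (fun j => if j < i then u j else if j = i then w else v j)
      = f (Function.update (fun j : Fin a => if (j : ℕ) < i then u j else v (j : ℕ)) ⟨i, hi⟩ w) := by
  unfold toCochain
  congr 1
  funext j
  rcases eq_or_ne j ⟨i, hi⟩ with h | h
  · subst h; simp
  · have hj : (j : ℕ) ≠ i := fun hc => h (Fin.ext hc)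
    rw [Function.update_of_ne h]
    simp [hj]

lemma map_update_sum' {a : ℕ} (f : MultilinearMap K (fun _ : Fin a => V) V)
    (m : Fin a → V) (i : Fin a) {ι : Type*} (s : Finset ι) (z : ι → ℤ) (v : ι → V) :
    f (Function.update m i (∑ q ∈ s, z q • v q)) = ∑ q ∈ s, z q • f (Function.update m i (v q)) := by
  let L : V →+ V := AddMonoidHom.mk' (fun w => f (Function.update m i w))
    (fun x y => f.map_update_add m i x y)
  have hL : ∀ w, f (Function.update m i w) = L w := fun _ => rfl
  rw [hL, map_sum]
  exact Finset.sum_congr rfl fun q _ => by rw [map_zsmul, hL]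

lemma map_update_zsmul' {a : ℕ} (f : MultilinearMap K (fun _ : Fin a => V) V)
    (m : Fin a → V) (i : Fin a) (z : ℤ) (v : V) :
    f (Function.update m i (z • v)) = z • f (Function.update m i v) :=
  map_zsmul (AddMonoidHom.mk' (fun w => f (Function.update m i w))
    (fun x y => f.map_update_add m i x y)) z v

lemma map_update_sub' {a : ℕ} (f : MultilinearMap K (fun _ : Fin a => V) V)
    (m : Fin a → V) (i : Fin a) (v w : V) :
    f (Function.update m i (v - w)) = f (Function.update m i v) - f (Function.update m i w) :=
  map_sub (AddMonoidHom.mk' (fun w => f (Function.update m i w))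
    (fun x y => f.map_update_add m i x y)) v w

lemma gerst_right_sub {a : ℕ} (l : ℕ) (f : MultilinearMap K (fun _ : Fin a => V) V)
    (g h : (ℕ → V) → V) :
    gerst a l (toCochain f) (g - h)
      = gerst a l (toCochain f) g - gerst a l (toCochain f) h := by
  funext x
  simp only [gerst, Pi.sub_apply]
  rw [← Finset.sum_sub_distrib]
  refine Finset.sum_congr rfl fun i hi => ?_
  have hia : i < a := Finset.mem_range.mp hi
  rw [toCochain_ite f i hia, toCochain_ite f i hia, toCochain_ite f i hia,
    map_update_sub', smul_sub]

lemma gerst_right_zsmul {a : ℕ} (l : ℕ) (z : ℤ) (f : MultilinearMap K (fun _ : Fin a => V) V)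
    (g : (ℕ → V) → V) :
    gerst a l (toCochain f) (z • g) = z • gerst a l (toCochain f) g := by
  funext x
  simp only [gerst, Pi.smul_apply, Finset.smul_sum]
  refine Finset.sum_congr rfl fun i hi => ?_
  have hia : i < a := Finset.mem_range.mp hi
  rw [toCochain_ite f i hia, toCochain_ite f i hia, map_update_zsmul']
  exact smul_comm _ _ _

lemma gerst_right_zero {a : ℕ} (l : ℕ) (f : MultilinearMap K (fun _ : Fin a => V) V) :
    gerst a l (toCochain f) (0 : (ℕ → V) → V) = 0 := by
  funext x
  simp only [gerst, Pi.zero_apply]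
  refine Finset.sum_eq_zero fun i hi => ?_
  have hia : i < a := Finset.mem_range.mp hi
  rw [toCochain_ite f i hia, f.map_update_zero, smul_zero]


/-- the term sequence for disjoint substitutions: `P` (arity `γ+1`) at `u`, `Q` (arity `β+1`)
at `w`, `u < w`. -/
def Dseq (x : ℕ → V) (γ β : ℕ) (P Q : (ℕ → V) → V) (u w : ℕ) : ℕ → V := fun j =>
  if j < u then x j else if j = u then P (fun s => x (u + s))
  else if j < w then x (j + γ) else if j = w then Q (fun s => x (w + γ + s))
  else x (j + β + γ)

def SSum {a : ℕ} (f : MultilinearMap K (fun _ : Fin a => V) V) (x : ℕ → V)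
    (γ β : ℕ) (P Q : (ℕ → V) → V) : V :=
  ∑ q ∈ (Finset.range a ×ˢ Finset.range a).filter (fun q => q.1 < q.2),
    ((-1 : ℤ) ^ (q.1 * γ + q.2 * β)) • toCochain f (Dseq x γ β P Q q.1 q.2)

def Zseq (x : ℕ → V) (b' c' : ℕ) (G H : (ℕ → V) → V) (i p : ℕ) : ℕ → V := fun j =>
  if j < p then (if j < i then x j else if j = i then H (fun s => x (i + s)) else x (j + c'))
  else if j = p then G (fun s => if p + s < i then x (p + s)
    else if p + s = i then H (fun s => x (i + s)) else x (p + s + c'))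
  else (if j + b' < i then x (j + b')
    else if j + b' = i then H (fun s => x (i + s)) else x (j + b' + c'))

def Wseq (x : ℕ → V) (b' c' : ℕ) (G H : (ℕ → V) → V) (p q : ℕ) : ℕ → V := fun j =>
  if j < p then x j
  else if j = p then G (fun s => if s < q then x (p + s)
    else if s = q then H (fun t => x (p + (q + t))) else x (p + (s + c')))
  else x (j + (b' + c'))

lemma expand2 {a : ℕ} (b' c' : ℕ) (F G H : (ℕ → V) → V) (x : ℕ → V) :
    gerst (a + b') (c' + 1) (gerst a (b' + 1) F G) H x
      = ∑ q ∈ Finset.range (a + b') ×ˢ Finset.range a,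
          ((-1 : ℤ) ^ (q.1 * c' + q.2 * b')) • F (Zseq x b' c' G H q.1 q.2) := by
  simp only [gerst, Nat.add_sub_cancel, Nat.add_succ_sub_one]
  rw [Finset.sum_product]
  refine Finset.sum_congr rfl fun i _ => ?_
  rw [Finset.smul_sum]
  refine Finset.sum_congr rfl fun p _ => ?_
  rw [smul_smul, ← pow_add]
  rfl

lemma expandN {a : ℕ} (b' c' : ℕ) (f : MultilinearMap K (fun _ : Fin a => V) V)
    (G H : (ℕ → V) → V) (x : ℕ → V) :
    gerst a (b' + c' + 1) (toCochain f) (gerst (b' + 1) (c' + 1) G H) x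
      = ∑ q ∈ Finset.range a ×ˢ Finset.range (b' + 1),
          ((-1 : ℤ) ^ (q.1 * (b' + c') + q.2 * c')) • toCochain f (Wseq x b' c' G H q.1 q.2) := by
  simp only [gerst, Nat.add_sub_cancel, Nat.add_succ_sub_one]
  rw [Finset.sum_product]
  refine Finset.sum_congr rfl fun p hp => ?_
  have hpa : p < a := Finset.mem_range.mp hp
  rw [toCochain_ite f p hpa, map_update_sum', Finset.smul_sum]
  refine Finset.sum_congr rfl fun q _ => ?_
  rw [smul_smul, ← pow_add]
  congr 1
  exact (toCochain_ite f p hpa x (fun j => x (j + (b' + c'))) _).symm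

end

section
variable {K V : Type*} [Field K] [AddCommGroup V] [Module K V]

lemma region1 {a : ℕ} (b' c' : ℕ) (f : MultilinearMap K (fun _ : Fin a => V) V)
    (G H : (ℕ → V) → V) (x : ℕ → V) :
    ∑ q ∈ (Finset.range (a + b') ×ˢ Finset.range a).filter (fun q => q.1 < q.2),
        ((-1 : ℤ) ^ (q.1 * c' + q.2 * b')) • toCochain f (Zseq x b' c' G H q.1 q.2)
      = SSum f x c' b' H G := by
  unfold SSum
  rw [show (Finset.range (a + b') ×ˢ Finset.range a).filter (fun q : ℕ × ℕ => q.1 < q.2)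
      = (Finset.range a ×ˢ Finset.range a).filter (fun q => q.1 < q.2) from by
    ext ⟨i, p⟩; simp only [mem_filter, mem_product, mem_range]; omega]
  refine Finset.sum_congr rfl fun q hq => ?_
  obtain ⟨i, p⟩ := q
  simp only [mem_filter, mem_product, mem_range] at hq
  dsimp only
  have hseq : Zseq x b' c' G H i p = Dseq x c' b' H G i p := by
    funext j
    simp only [Zseq, Dseq]
    split_ifs <;> first
      | rfl
      | (exfalso; omega)
      | (congr 1; omega)
      | (congr 1; funext s; split_ifs <;>
          first | rfl | (exfalso; omega) | (congr 1; omega) | (congr 1; funext t; congr 1; omega))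
  rw [hseq]

lemma region3 {a : ℕ} (b' c' : ℕ) (f : MultilinearMap K (fun _ : Fin a => V) V)
    (G H : (ℕ → V) → V) (hG : ∀ u v : ℕ → V, (∀ s, s < b' + 1 → u s = v s) → G u = G v)
    (x : ℕ → V) :
    ∑ q ∈ (Finset.range (a + b') ×ˢ Finset.range a).filter
        (fun q => ¬ q.1 < q.2 ∧ ¬ q.1 ≤ q.2 + b'),
        ((-1 : ℤ) ^ (q.1 * c' + q.2 * b')) • toCochain f (Zseq x b' c' G H q.1 q.2)
      = ((-1 : ℤ) ^ (b' * c')) • SSum f x b' c' G H := by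
  unfold SSum
  rw [Finset.smul_sum]
  refine Finset.sum_nbij' (fun q => (q.2, q.1 - b')) (fun q => (q.2 + b', q.1)) ?_ ?_ ?_ ?_ ?_
  · rintro ⟨i, p⟩ hq; dsimp only; simp only [mem_filter, mem_product, mem_range] at hq ⊢; omega
  · rintro ⟨u, w⟩ hq; dsimp only; simp only [mem_filter, mem_product, mem_range] at hq ⊢; omega
  · rintro ⟨i, p⟩ hq; simp only [mem_filter, mem_product, mem_range] at hq
    simp only [Prod.ext_iff, and_true, true_and]; omega
  · rintro ⟨u, w⟩ hq; simp only [mem_filter, mem_product, mem_range] at hq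
    simp only [Prod.ext_iff, and_true, true_and]; omega
  · rintro ⟨i, p⟩ hq; simp only [mem_filter, mem_product, mem_range] at hq
    obtain ⟨m, rfl⟩ : ∃ m, i = m + b' := ⟨i - b', by omega⟩
    dsimp only
    simp only [Nat.add_sub_cancel]
    have hGarg : G (fun s => if p + s < m + b' then x (p + s)
        else if p + s = m + b' then H (fun t => x (m + b' + t)) else x (p + s + c'))
        = G (fun s => x (p + s)) := by
      refine hG _ _ fun s hs => ?_
      rw [if_pos (by omega)]
    have hseq : Zseq x b' c' G H (m + b') p = Dseq x b' c' G H p m := by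
      funext j
      simp only [Zseq, Dseq]
      split_ifs <;> first
        | rfl
        | (exfalso; omega)
        | (congr 1; omega)
        | (exact hGarg)
        | (congr 1; funext s; split_ifs <;>
            first | rfl | (exfalso; omega) | (congr 1; omega) | (congr 1; funext t; congr 1; omega))
    rw [hseq, smul_smul, ← pow_add,
      show (m + b') * c' + p * b' = b' * c' + (p * b' + m * c') from by ring]

lemma region2 {a : ℕ} (b' c' : ℕ) (f : MultilinearMap K (fun _ : Fin a => V) V)
    (G H : (ℕ → V) → V) (x : ℕ → V) :
    ∑ q ∈ (Finset.range (a + b') ×ˢ Finset.range a).filter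
        (fun q => ¬ q.1 < q.2 ∧ q.1 ≤ q.2 + b'),
        ((-1 : ℤ) ^ (q.1 * c' + q.2 * b')) • toCochain f (Zseq x b' c' G H q.1 q.2)
      = ∑ q ∈ Finset.range a ×ˢ Finset.range (b' + 1),
          ((-1 : ℤ) ^ (q.1 * (b' + c') + q.2 * c')) • toCochain f (Wseq x b' c' G H q.1 q.2) := by
  refine Finset.sum_nbij' (fun q => (q.2, q.1 - q.2)) (fun q => (q.1 + q.2, q.1)) ?_ ?_ ?_ ?_ ?_
  · rintro ⟨i, p⟩ hq; dsimp only; simp only [mem_filter, mem_product, mem_range] at hq ⊢; omega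
  · rintro ⟨u, w⟩ hq; dsimp only; simp only [mem_filter, mem_product, mem_range] at hq ⊢; omega
  · rintro ⟨i, p⟩ hq; simp only [mem_filter, mem_product, mem_range] at hq
    simp only [Prod.ext_iff, and_true, true_and]; omega
  · rintro ⟨u, w⟩ hq; simp only [mem_filter, mem_product, mem_range] at hq
    simp only [Prod.ext_iff, and_true, true_and]; omega
  · rintro ⟨i, p⟩ hq; simp only [mem_filter, mem_product, mem_range] at hq
    obtain ⟨m, rfl⟩ : ∃ m, i = p + m := ⟨i - p, by omega⟩
    dsimp only
    simp only [Nat.add_sub_cancel_left]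
    have hseq : Zseq x b' c' G H (p + m) p = Wseq x b' c' G H p m := by
      funext j
      simp only [Zseq, Wseq]
      split_ifs <;> first
        | rfl
        | (exfalso; omega)
        | (congr 1; omega)
        | (congr 1; funext s; split_ifs <;>
            first | rfl | (exfalso; omega) | (congr 1; omega) | (congr 1; funext t; congr 1; omega))
    rw [hseq, show (p + m) * c' + p * b' = p * (b' + c') + m * c' from by ring]

lemma decomp {a : ℕ} (b' c' : ℕ) (f : MultilinearMap K (fun _ : Fin a => V) V)
    (G H : (ℕ → V) → V) (hG : ∀ u v : ℕ → V, (∀ s, s < b' + 1 → u s = v s) → G u = G v)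
    (x : ℕ → V) :
    gerst (a + b') (c' + 1) (gerst a (b' + 1) (toCochain f) G) H x
      = SSum f x c' b' H G + ((-1 : ℤ) ^ (b' * c')) • SSum f x b' c' G H
        + gerst a (b' + c' + 1) (toCochain f) (gerst (b' + 1) (c' + 1) G H) x := by
  classical
  rw [expand2, expandN]
  rw [← Finset.sum_filter_add_sum_filter_not (Finset.range (a + b') ×ˢ Finset.range a)
    (fun q => q.1 < q.2)]
  rw [← Finset.sum_filter_add_sum_filter_not
    ((Finset.range (a + b') ×ˢ Finset.range a).filter (fun q => ¬ q.1 < q.2))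
    (fun q => q.1 ≤ q.2 + b')]
  rw [Finset.filter_filter, Finset.filter_filter]
  rw [region1, region2, region3 b' c' f G H hG]
  abel

end


/-- for odd `n ≥ 3` and an `n`-ary partially associative algebra `(V, μ)`,
if `φ ∈ χ^k(V)` (i.e. `(φ•μ)•μ = 0`, `(μ•φ)•μ = 0` and `μ•(φ•μ) = 0`), then
`∂^k φ = (−1)^{k−1} μ•φ − φ•μ` again lies in `χ^{k+n−1}(V)`. -/
theorem partial_maps_chi_to_chi {K V : Type*} [Field K] [CharZero K]
    [AddCommGroup V] [Module K V]
    (n : ℕ) (hn : Odd n) (hn' : 3 ≤ n)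
    (μ : MultilinearMap K (fun _ : Fin n => V) V)
    (hμ : gerst n n (toCochain μ) (toCochain μ) = 0)
    (k : ℕ) (hk : 1 ≤ k)
    (φ : MultilinearMap K (fun _ : Fin k => V) V)
    (hφ1 : gerst (k + n - 1) n (gerst k n (toCochain φ) (toCochain μ)) (toCochain μ) = 0)
    (hφ2 : gerst (n + k - 1) n (gerst n k (toCochain μ) (toCochain φ)) (toCochain μ) = 0)
    (hφ3 : gerst n (k + n - 1) (toCochain μ) (gerst k n (toCochain φ) (toCochain μ)) = 0) :
    gerst ((k + n - 1) + n - 1) n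
        (gerst (k + n - 1) n
          (((-1 : ℤ) ^ (k - 1)) • gerst n k (toCochain μ) (toCochain φ)
            - gerst k n (toCochain φ) (toCochain μ)) (toCochain μ)) (toCochain μ) = 0
    ∧ gerst (n + (k + n - 1) - 1) n
        (gerst n (k + n - 1) (toCochain μ)
          (((-1 : ℤ) ^ (k - 1)) • gerst n k (toCochain μ) (toCochain φ)
            - gerst k n (toCochain φ) (toCochain μ))) (toCochain μ) = 0
    ∧ gerst n ((k + n - 1) + n - 1) (toCochain μ)
        (gerst (k + n - 1) n
          (((-1 : ℤ) ^ (k - 1)) • gerst n k (toCochain μ) (toCochain φ)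
            - gerst k n (toCochain φ) (toCochain μ)) (toCochain μ)) = 0 := by
  have hdep : ∀ {m : ℕ} (f : MultilinearMap K (fun _ : Fin m => V) V) (u v : ℕ → V),
      (∀ s, s < m → u s = v s) → toCochain f u = toCochain f v := by
    intro m f u v h
    unfold toCochain
    congr 1
    funext j
    exact h j j.isLt
  obtain ⟨n1, rfl⟩ : ∃ n1, n = n1 + 1 := ⟨n - 1, by omega⟩
  obtain ⟨k1, rfl⟩ : ∃ k1, k = k1 + 1 := ⟨k - 1, by omega⟩
  have e1 : (k1 + 1) + (n1 + 1) - 1 = k1 + n1 + 1 := by omega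
  have e4 : (n1 + 1) + (k1 + 1) - 1 = n1 + k1 + 1 := by omega
  rw [e1] at hφ1 hφ3 ⊢
  rw [e4] at hφ2
  have e2 : (k1 + n1 + 1) + (n1 + 1) - 1 = k1 + n1 + n1 + 1 := by omega
  have e3 : (n1 + 1) + (k1 + n1 + 1) - 1 = n1 + k1 + n1 + 1 := by omega
  have e5 : k1 + 1 - 1 = k1 := by omega
  rw [e2, e3, e5]
  -- abbreviations
  set A := gerst (n1 + 1) (k1 + 1) (toCochain μ) (toCochain φ) with hA
  set B := gerst (k1 + 1) (n1 + 1) (toCochain φ) (toCochain μ) with hB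
  have hA0 : gerst (k1 + n1 + 1) (n1 + 1) A (toCochain μ) = 0 := by
    rw [show k1 + n1 + 1 = n1 + k1 + 1 from by omega]
    exact hφ2
  have hInner : gerst (k1 + n1 + 1) (n1 + 1)
      (((-1 : ℤ) ^ k1) • A - B) (toCochain μ) = 0 := by
    rw [gerst_sub_left, gerst_zsmul_left, hA0, hφ1, smul_zero, sub_zero]
  have hX : gerst (n1 + 1) (k1 + n1 + 1) (toCochain μ) A = 0 := by
    funext x
    have d1 := decomp (a := n1 + 1) n1 k1 μ (toCochain μ) (toCochain φ)
      (fun u v h => hdep μ u v h) x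
    have d2 := decomp (a := n1 + 1) k1 n1 μ (toCochain φ) (toCochain μ)
      (fun u v h => hdep φ u v h) x
    rw [hμ, gerst_zero_left] at d1
    rw [show (n1 + 1) + k1 = n1 + k1 + 1 from by omega, hφ2, hφ3] at d2
    simp only [Pi.zero_apply] at d1 d2
    rw [add_zero, mul_comm k1 n1] at d2
    have hS2 : SSum μ x n1 k1 (toCochain μ) (toCochain φ)
        = -(((-1 : ℤ) ^ (n1 * k1)) • SSum μ x k1 n1 (toCochain φ) (toCochain μ)) :=
      eq_neg_of_add_eq_zero_left d2.symm
    rw [hS2, smul_neg, smul_smul, ← pow_add,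
      show ((-1 : ℤ)) ^ (n1 * k1 + n1 * k1) = 1 from Even.neg_one_pow ⟨n1 * k1, rfl⟩,
      one_smul] at d1
    rw [add_neg_cancel, zero_add] at d1
    rw [show k1 + n1 + 1 = n1 + k1 + 1 from by omega]
    exact d1.symm
  have hInner2 : gerst (n1 + 1) (k1 + n1 + 1) (toCochain μ)
      (((-1 : ℤ) ^ k1) • A - B) = 0 := by
    rw [gerst_right_sub, gerst_right_zsmul, hX, hφ3, smul_zero, sub_zero]
  refine ⟨?_, ?_, ?_⟩
  · rw [hInner, gerst_zero_left]
  · rw [hInner2, gerst_zero_left]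
  · rw [hInner, gerst_right_zero]
end

section
/- Let (V, μ) be a 3-ary partially associative algebra over a field K of characteristic zero, i.e., μ : V × V × V → V is trilinear and μ(μ(x_1,x_2,x_3),x_4,x_5) + μ(x_1,μ(x_2,x_3,x_4),x_5) + μ(x_1,x_2,μ(x_3,x_4,x_5)) = 0 for all x_i ∈ V. Then μ satisfies the degree-7 relation: for all x_1,…,x_7 ∈ V, μ(μ(x_1,x_2,x_3), μ(x_4,x_5,x_6), x_7) + μ(μ(x_1,x_2,x_3), x_4, μ(x_5,x_6,x_7)) + μ(x_1, μ(x_2,x_3,x_4), μ(x_5,x_6,x_7)) = 0. -/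
/-- a 3-ary partially associative algebra `(V, μ)` satisfies the degree-7
relation `μ(μ(x₁,x₂,x₃), μ(x₄,x₅,x₆), x₇) + μ(μ(x₁,x₂,x₃), x₄, μ(x₅,x₆,x₇))
+ μ(x₁, μ(x₂,x₃,x₄), μ(x₅,x₆,x₇)) = 0`. -/
theorem degree_seven_relation_one {K V : Type*} [Field K] [CharZero K]
    [AddCommGroup V] [Module K V]
    (μ : V →ₗ[K] V →ₗ[K] V →ₗ[K] V)
    (h : ∀ x1 x2 x3 x4 x5 : V,
      μ (μ x1 x2 x3) x4 x5 + μ x1 (μ x2 x3 x4) x5 + μ x1 x2 (μ x3 x4 x5) = 0) :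
    ∀ x1 x2 x3 x4 x5 x6 x7 : V,
      μ (μ x1 x2 x3) (μ x4 x5 x6) x7 + μ (μ x1 x2 x3) x4 (μ x5 x6 x7)
        + μ x1 (μ x2 x3 x4) (μ x5 x6 x7) = 0 := by
  intro x1 x2 x3 x4 x5 x6 x7
  set A := μ x1 x2 x3 with hA
  set B := μ x4 x5 x6 with hB
  set C := μ x5 x6 x7 with hC
  set D := μ x2 x3 x4 with hD
  set M := μ x3 x4 x5 with hM
  -- the eight instances of the identity
  have E1 := h A x4 x5 x6 x7
  have E2 := h x1 D x5 x6 x7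
  have E3 := h x1 x2 M x6 x7
  have E6 := h x1 x2 x3 B x7
  have E7 := h x1 x2 x3 x4 C
  -- wrapped instances
  have E0w : μ (μ A x4 x5) x6 x7 + μ (μ x1 D x5) x6 x7 + μ (μ x1 x2 M) x6 x7 = 0 := by
    have e0 := h x1 x2 x3 x4 x5
    have := congrArg (fun y => μ y x6 x7) e0
    simpa [map_add, LinearMap.add_apply] using this
  have E4w : μ x1 (μ D x5 x6) x7 + μ x1 (μ x2 M x6) x7 + μ x1 (μ x2 x3 B) x7 = 0 := by
    have e4 := h x2 x3 x4 x5 x6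
    have := congrArg (fun y => μ x1 y x7) e4
    simpa [map_add, LinearMap.add_apply] using this
  have E5w : μ x1 x2 (μ M x6 x7) + μ x1 x2 (μ x3 B x7) + μ x1 x2 (μ x3 x4 C) = 0 := by
    have e5 := h x3 x4 x5 x6 x7
    have := congrArg (fun y => μ x1 x2 y) e5
    simpa [map_add] using this
  have sum : (μ (μ A x4 x5) x6 x7 + μ A B x7 + μ A x4 C)
      + (μ A B x7 + μ x1 (μ x2 x3 B) x7 + μ x1 x2 (μ x3 B x7))
      + (μ A x4 C + μ x1 D C + μ x1 x2 (μ x3 x4 C))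
      + (μ (μ x1 D x5) x6 x7 + μ x1 (μ D x5 x6) x7 + μ x1 D C)
      + (μ (μ x1 x2 M) x6 x7 + μ x1 (μ x2 M x6) x7 + μ x1 x2 (μ M x6 x7))
      - (μ (μ A x4 x5) x6 x7 + μ (μ x1 D x5) x6 x7 + μ (μ x1 x2 M) x6 x7)
      - (μ x1 (μ D x5 x6) x7 + μ x1 (μ x2 M x6) x7 + μ x1 (μ x2 x3 B) x7)
      - (μ x1 x2 (μ M x6 x7) + μ x1 x2 (μ x3 B x7) + μ x1 x2 (μ x3 x4 C)) = 0 := by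
    rw [E1, E6, E7, E2, E3, E0w, E4w, E5w]
    abel
  have key : (μ A B x7 + μ A x4 C + μ x1 D C) + (μ A B x7 + μ A x4 C + μ x1 D C) = 0 := by
    rw [← sum]; abel
  have key2 : (2 : K) • (μ A B x7 + μ A x4 C + μ x1 D C) = 0 := by
    rw [two_smul]; exact key
  rcases smul_eq_zero.mp key2 with h2 | h0
  · exact absurd h2 two_ne_zero
  · exact h0
end

section
/- Let (V, μ) be a 3-ary partially associative algebra over a field K of characteristic zero. Then μ satisfies the degree-7 relation: for all x_1,…,x_7 ∈ V, μ(μ(μ(x_1,x_2,x_3),x_4,x_5),x_6,x_7) − μ(μ(x_1,x_2,x_3), μ(x_4,x_5,x_6), x_7) + μ(x_1, x_2, μ(x_3, x_4, μ(x_5,x_6,x_7))) − μ(x_1, μ(x_2,x_3,x_4), μ(x_5,x_6,x_7)) = 0. -/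
/-- a 3-ary partially associative algebra `(V, μ)` satisfies the degree-7
relation `μ(μ(μ(x₁,x₂,x₃),x₄,x₅),x₆,x₇) − μ(μ(x₁,x₂,x₃), μ(x₄,x₅,x₆), x₇)
+ μ(x₁, x₂, μ(x₃, x₄, μ(x₅,x₆,x₇))) − μ(x₁, μ(x₂,x₃,x₄), μ(x₅,x₆,x₇)) = 0`. -/
theorem degree_seven_relation_two {K V : Type*} [Field K] [CharZero K]
    [AddCommGroup V] [Module K V]
    (μ : V →ₗ[K] V →ₗ[K] V →ₗ[K] V)
    (h : ∀ x1 x2 x3 x4 x5 : V,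
      μ (μ x1 x2 x3) x4 x5 + μ x1 (μ x2 x3 x4) x5 + μ x1 x2 (μ x3 x4 x5) = 0) :
    ∀ x1 x2 x3 x4 x5 x6 x7 : V,
      μ (μ (μ x1 x2 x3) x4 x5) x6 x7 - μ (μ x1 x2 x3) (μ x4 x5 x6) x7
        + μ x1 x2 (μ x3 x4 (μ x5 x6 x7)) - μ x1 (μ x2 x3 x4) (μ x5 x6 x7) = 0 := by
  intro x1 x2 x3 x4 x5 x6 x7
  have e3 := h x1 (μ x2 x3 x4) x5 x6 x7
  have e4 := h x1 x2 (μ x3 x4 x5) x6 x7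
  have e5 := congrArg (fun w => μ x1 w x7) (h x2 x3 x4 x5 x6)
  simp only [map_add, LinearMap.add_apply, map_zero, LinearMap.zero_apply] at e5
  have e6 := congrArg (fun w => μ x1 x2 w) (h x3 x4 x5 x6 x7)
  simp only [map_add, map_zero] at e6
  have e7 := h x1 x2 x3 (μ x4 x5 x6) x7
  have e8 := congrArg (fun w => μ w x6 x7) (h x1 x2 x3 x4 x5)
  simp only [map_add, LinearMap.add_apply, map_zero, LinearMap.zero_apply] at e8
  calc μ (μ (μ x1 x2 x3) x4 x5) x6 x7 - μ (μ x1 x2 x3) (μ x4 x5 x6) x7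
        + μ x1 x2 (μ x3 x4 (μ x5 x6 x7)) - μ x1 (μ x2 x3 x4) (μ x5 x6 x7)
      = -(μ (μ x1 (μ x2 x3 x4) x5) x6 x7 + μ x1 (μ (μ x2 x3 x4) x5 x6) x7
            + μ x1 (μ x2 x3 x4) (μ x5 x6 x7))
        - (μ (μ x1 x2 (μ x3 x4 x5)) x6 x7 + μ x1 (μ x2 (μ x3 x4 x5) x6) x7
            + μ x1 x2 (μ (μ x3 x4 x5) x6 x7))
        + (μ x1 (μ (μ x2 x3 x4) x5 x6) x7 + μ x1 (μ x2 (μ x3 x4 x5) x6) x7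
            + μ x1 (μ x2 x3 (μ x4 x5 x6)) x7)
        + (μ x1 x2 (μ (μ x3 x4 x5) x6 x7) + μ x1 x2 (μ x3 (μ x4 x5 x6) x7)
            + μ x1 x2 (μ x3 x4 (μ x5 x6 x7)))
        - (μ (μ x1 x2 x3) (μ x4 x5 x6) x7 + μ x1 (μ x2 x3 (μ x4 x5 x6)) x7
            + μ x1 x2 (μ x3 (μ x4 x5 x6) x7))
        + (μ (μ (μ x1 x2 x3) x4 x5) x6 x7 + μ (μ x1 (μ x2 x3 x4) x5) x6 x7
            + μ (μ x1 x2 (μ x3 x4 x5)) x6 x7) := by abel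
    _ = 0 := by rw [e3, e4, e5, e6, e7, e8]; abel
end

section
/- Let V be a vector space of finite dimension m ≥ 1 over a field K of characteristic zero. Index by the 12 pairs (i,j) with 1 ≤ i ≤ 3 and i ≤ j ≤ 5 (corresponding to the 12 complete ternary parenthesizations of 7 letters) a direct sum W = ⊕_{(i,j)} W_{(i,j)} of 12 copies of V^{⊗7}; for w ∈ V^{⊗7} write w_{(i,j)} for the copy of w in the summand W_{(i,j)}. Let R_7 ⊆ W be the linear span, over all w ∈ V^{⊗7}, of the eight vectors w_{(1,1)} + w_{(1,4)} + w_{(1,5)}, w_{(1,2)} + w_{(2,2)} + w_{(2,5)}, w_{(1,3)} + w_{(2,3)} + w_{(3,3)}, w_{(1,4)} + w_{(2,4)} + w_{(3,4)}, w_{(1,5)} + w_{(2,5)} + w_{(3,5)}, w_{(1,1)} + w_{(1,2)} + w_{(1,3)}, w_{(2,2)} + w_{(2,3)} + w_{(2,4)}, and w_{(3,3)} + w_{(3,4)} + w_{(3,5)}. Then dim(W / R_7) = 4 m^7. -/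
open scoped TensorProduct

/-- The index set of the 12 complete ternary parenthesizations of 7 letters: pairs `(i, j)`
with `1 ≤ i ≤ 3` and `i ≤ j ≤ 5` recording the positions of the two inner left brackets. -/
def ParenIdx : Type := {ij : ℕ × ℕ // 1 ≤ ij.1 ∧ ij.1 ≤ 3 ∧ ij.1 ≤ ij.2 ∧ ij.2 ≤ 5}

/-- The copy `w_{(i,j)}` of `w ∈ V^{⊗7}` placed in the summand indexed by `(i, j)` of the
direct sum of 12 copies of `V^{⊗7}`. -/
noncomputable def copyAt {K V : Type*} [Field K] [AddCommGroup V] [Module K V]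
    (i j : ℕ) (w : TensorPower K 7 V) : ParenIdx → TensorPower K 7 V :=
  fun idx => if idx.val = (i, j) then w else 0

instance : DecidableEq ParenIdx := inferInstanceAs (DecidableEq {ij : ℕ × ℕ // 1 ≤ ij.1 ∧ ij.1 ≤ 3 ∧ ij.1 ≤ ij.2 ∧ ij.2 ≤ 5})
def mkP (i j : ℕ) (h : 1 ≤ i ∧ i ≤ 3 ∧ i ≤ j ∧ j ≤ 5 := by decide) : ParenIdx := ⟨(i,j), h⟩
def plist : List ParenIdx :=
  [mkP 1 1, mkP 1 2, mkP 1 3, mkP 1 4, mkP 1 5, mkP 2 2, mkP 2 3, mkP 2 4, mkP 2 5,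
   mkP 3 3, mkP 3 4, mkP 3 5]
instance : Fintype ParenIdx := ⟨⟨(plist : List ParenIdx), by decide⟩, by
  show ∀ x : ParenIdx, x ∈ plist
  rintro ⟨⟨a,b⟩,h1,h2,h3,h4⟩
  interval_cases a <;> interval_cases b <;>
    simp [plist, mkP, Finset.mem_mk, Subtype.ext_iff] <;> exact List.mem_of_elem_eq_true rfl⟩

/-- columns of the matrix `C` (supports; all entries are 0 or 1) -/
def colC : ℕ × ℕ → List (ℕ × ℕ)
  | (1,1) => [(1,1),(1,4),(1,5)]
  | (1,2) => [(1,2),(2,2),(2,5)]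
  | (1,3) => [(1,3),(2,3),(3,3)]
  | (1,4) => [(1,4),(2,4),(3,4)]
  | (1,5) => [(1,5),(2,5),(3,5)]
  | (2,2) => [(1,1),(1,2),(1,3)]
  | (2,3) => [(2,2),(2,3),(2,4)]
  | (2,4) => [(3,3),(3,4),(3,5)]
  | (2,5) => [(1,1)]
  | (3,3) => [(1,2)]
  | (3,4) => [(1,4)]
  | (3,5) => [(2,3)]
  | _ => []

def Cfun (p q : ℕ × ℕ) : ℤ := if p ∈ colC q then 1 else 0

/-- rows of `2·B` where `B = C⁻¹`, split by entry value (entries of `2B` are in {0,±1,±2}) -/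
def rowB2 : ℕ × ℕ → List (ℕ × ℕ)
  | (1,1) => [(1,5)]
  | (1,3) => [(3,3)]
  | (2,2) => [(1,3)]
  | (2,5) => [(1,1),(2,4),(2,5),(3,3)]
  | (3,3) => [(1,2),(2,4),(3,3)]
  | (3,4) => [(1,4),(3,5)]
  | (3,5) => [(2,3),(3,4)]
  | _ => []
def rowBm2 : ℕ × ℕ → List (ℕ × ℕ)
  | (2,2) => [(3,3)]
  | (2,5) => [(1,3),(1,5),(2,2),(3,4)]
  | (3,3) => [(1,3),(2,2),(3,4)]
  | (3,4) => [(1,5),(3,4)]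
  | (3,5) => [(2,4),(3,3)]
  | _ => []
def rowB1 : ℕ × ℕ → List (ℕ × ℕ)
  | (1,1) => [(2,2),(3,4)]
  | (1,2) => [(2,2),(2,5),(3,4)]
  | (1,3) => [(2,4),(2,5)]
  | (1,4) => [(2,4),(2,5),(3,4)]
  | (1,5) => [(2,4),(2,5),(3,5)]
  | (2,2) => [(2,2),(3,4),(3,5)]
  | (2,3) => [(2,2),(2,4),(3,5)]
  | (2,4) => [(2,2),(3,4),(3,5)]
  | _ => []
def rowBm1 : ℕ × ℕ → List (ℕ × ℕ)
  | (1,1) => [(2,4),(2,5),(3,5)]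
  | (1,2) => [(2,4),(3,5)]
  | (1,3) => [(2,2),(3,4),(3,5)]
  | (1,4) => [(2,2),(3,5)]
  | (1,5) => [(2,2),(3,4)]
  | (2,2) => [(2,4),(2,5)]
  | (2,3) => [(2,5),(3,4)]
  | (2,4) => [(2,4),(2,5)]
  | _ => []

def Bfun (p q : ℕ × ℕ) : ℤ :=
  (if q ∈ rowB2 p then 2 else 0) + (if q ∈ rowBm2 p then -2 else 0)
    + (if q ∈ rowB1 p then 1 else 0) + (if q ∈ rowBm1 p then -1 else 0)

set_option maxRecDepth 10000 in
theorem BC_fact : ∀ i k : ParenIdx,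
    (∑ j : ParenIdx, Bfun i.val j.val * Cfun j.val k.val) = if i = k then 2 else 0 := by decide

set_option maxRecDepth 10000 in
theorem CB_fact : ∀ i k : ParenIdx,
    (∑ j : ParenIdx, Cfun i.val j.val * Bfun j.val k.val) = if i = k then 2 else 0 := by decide

open scoped TensorProduct

section MatLin
variable {K : Type*} [Field K] {T : Type*} [AddCommGroup T] [Module K T]

/-- the linear endomorphism of `ParenIdx → T` given by an integer matrix -/
def matLin (Bf : ℕ × ℕ → ℕ × ℕ → ℤ) : (ParenIdx → T) →ₗ[K] (ParenIdx → T) where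
  toFun f := fun i => ∑ j : ParenIdx, ((Bf i.val j.val : ℤ) : K) • f j
  map_add' f g := by
    funext i
    simp [smul_add, Finset.sum_add_distrib]
  map_smul' c f := by
    funext i
    simp [Finset.smul_sum, smul_comm c]

theorem matLin_apply (Bf : ℕ × ℕ → ℕ × ℕ → ℤ) (f : ParenIdx → T) (i : ParenIdx) :
    matLin (K := K) Bf f i = ∑ j : ParenIdx, ((Bf i.val j.val : ℤ) : K) • f j := rfl

theorem matLin_matLin (Bf Cf : ℕ × ℕ → ℕ × ℕ → ℤ) (f : ParenIdx → T) (i : ParenIdx) :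
    matLin (K := K) Bf (matLin (K := K) Cf f) i
      = ∑ k : ParenIdx, (((∑ j : ParenIdx, Bf i.val j.val * Cf j.val k.val : ℤ)) : K) • f k := by
  simp only [matLin_apply, Finset.smul_sum, smul_smul]
  rw [Finset.sum_comm]
  congr 1
  funext k
  push_cast [Finset.sum_smul]
  rfl

theorem matLin_B_C (f : ParenIdx → T) :
    matLin (K := K) Bfun (matLin (K := K) Cfun f) = (2 : K) • f := by
  funext i
  rw [matLin_matLin]
  simp only [BC_fact]
  simp [apply_ite (Int.cast : ℤ → K), ite_smul, Finset.sum_ite_eq]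

theorem matLin_C_B (f : ParenIdx → T) :
    matLin (K := K) Cfun (matLin (K := K) Bfun f) = (2 : K) • f := by
  funext i
  rw [matLin_matLin]
  simp only [CB_fact]
  simp [apply_ite (Int.cast : ℤ → K), ite_smul, Finset.sum_ite_eq]

end MatLin

section Equiv
variable {K : Type*} [Field K] [CharZero K] {T : Type*} [AddCommGroup T] [Module K T]

/-- the invertible change of coordinates on `ParenIdx → T` given by `B` -/
noncomputable def matEquiv : (ParenIdx → T) ≃ₗ[K] (ParenIdx → T) :=
  LinearEquiv.ofLinear (matLin Bfun) ((2 : K)⁻¹ • matLin Cfun)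
    (by
      refine LinearMap.ext fun f => ?_
      show matLin (K := K) Bfun ((2:K)⁻¹ • matLin (K := K) Cfun f) = f
      rw [map_smul, matLin_B_C, smul_smul, inv_mul_cancel₀ (two_ne_zero), one_smul])
    (by
      refine LinearMap.ext fun f => ?_
      show (2:K)⁻¹ • matLin (K := K) Cfun (matLin (K := K) Bfun f) = f
      rw [matLin_C_B, smul_smul, inv_mul_cancel₀ (two_ne_zero), one_smul])

theorem matEquiv_apply (f : ParenIdx → T) :
    matEquiv (K := K) f = matLin (K := K) Bfun f := rfl

theorem matLin_col (q : ParenIdx) (w : T) :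
    matLin (K := K) Bfun (fun idx => ((Cfun idx.val q.val : ℤ) : K) • w)
      = (2 : K) • (Pi.single q w : ParenIdx → T) := by
  funext i
  rw [matLin_apply]
  have : ∀ j : ParenIdx, ((Bfun i.val j.val : ℤ) : K) • (((Cfun j.val q.val : ℤ) : K) • w)
      = (((Bfun i.val j.val * Cfun j.val q.val : ℤ)) : K) • w := by
    intro j; rw [smul_smul, ← Int.cast_mul]
  simp only [this]
  rw [← Finset.sum_smul, ← Int.cast_sum, BC_fact i q]
  by_cases h : i = q
  · subst h; simp
  · simp [h, Pi.single_eq_of_ne h]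

end Equiv

section Bridge
variable {K V : Type*} [Field K] [AddCommGroup V] [Module K V]

theorem three_copy (a b c d e g : ℕ) (w : TensorPower K 7 V) (q : ParenIdx)
    (hq : colC q.val = [(a,b),(c,d),(e,g)])
    (n1 : ((a,b) : ℕ × ℕ) ≠ (c,d)) (n2 : ((a,b) : ℕ × ℕ) ≠ (e,g))
    (n3 : ((c,d) : ℕ × ℕ) ≠ (e,g)) :
    copyAt a b w + copyAt c d w + copyAt e g w
      = fun idx => ((Cfun idx.val q.val : ℤ) : K) • w := by
  funext idx
  simp only [Pi.add_apply, copyAt, Cfun, hq, List.mem_cons, List.not_mem_nil, or_false]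
  by_cases e1 : idx.val = (a,b) <;> by_cases e2 : idx.val = (c,d) <;>
    by_cases e3 : idx.val = (e,g) <;> simp_all <;> split_ifs <;> simp_all

end Bridge

/-- the four "surviving" coordinates -/
def Bad (p : ParenIdx) : Prop := p.val = (2,5) ∨ p.val.1 = 3

instance : DecidablePred Bad := fun p => inferInstanceAs (Decidable (_ ∨ _))

example : Fintype.card {p : ParenIdx // Bad p} = 4 := by decide

section Main
variable {K V : Type*} [Field K] [CharZero K] [AddCommGroup V] [Module K V]

/-- the set of relation vectors -/
def relSet (K V : Type*) [Field K] [AddCommGroup V] [Module K V] :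
    Set (ParenIdx → TensorPower K 7 V) :=
  {v : ParenIdx → TensorPower K 7 V | ∃ w : TensorPower K 7 V,
    v = copyAt 1 1 w + copyAt 1 4 w + copyAt 1 5 w ∨
    v = copyAt 1 2 w + copyAt 2 2 w + copyAt 2 5 w ∨
    v = copyAt 1 3 w + copyAt 2 3 w + copyAt 3 3 w ∨
    v = copyAt 1 4 w + copyAt 2 4 w + copyAt 3 4 w ∨
    v = copyAt 1 5 w + copyAt 2 5 w + copyAt 3 5 w ∨
    v = copyAt 1 1 w + copyAt 1 2 w + copyAt 1 3 w ∨
    v = copyAt 2 2 w + copyAt 2 3 w + copyAt 2 4 w ∨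
    v = copyAt 3 3 w + copyAt 3 4 w + copyAt 3 5 w}

/-- the projection onto the four surviving coordinates -/
noncomputable def proj (K V : Type*) [Field K] [AddCommGroup V] [Module K V] :
    (ParenIdx → TensorPower K 7 V) →ₗ[K] ({p : ParenIdx // Bad p} → TensorPower K 7 V) :=
  LinearMap.funLeft K (TensorPower K 7 V) Subtype.val

theorem single_mem_ker (q : ParenIdx) (hq : ¬ Bad q) (w : TensorPower K 7 V) :
    (Pi.single q w : ParenIdx → TensorPower K 7 V) ∈ LinearMap.ker (proj K V) := by
  have h0 : ∀ x : {p : ParenIdx // Bad p},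
      (Pi.single q w : ParenIdx → TensorPower K 7 V) x.val = 0 :=
    fun x => by
      have hx : (x.val : ParenIdx) ≠ q := fun h => hq (h ▸ x.prop)
      exact Pi.single_eq_of_ne (M := fun _ : ParenIdx => TensorPower K 7 V) hx w
  rw [LinearMap.mem_ker]
  exact funext h0

theorem span_image_eq_ker :
    Submodule.span K ((matLin (K := K) Bfun) '' relSet K V) = LinearMap.ker (proj K V) := by
  apply le_antisymm
  · rw [Submodule.span_le]
    rintro v ⟨u, ⟨w, hu⟩, rfl⟩
    have step : ∀ q : ParenIdx, ¬ Bad q → ∀ u : ParenIdx → TensorPower K 7 V,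
        u = (fun idx => ((Cfun idx.val q.val : ℤ) : K) • w) →
        matLin (K := K) Bfun u ∈ LinearMap.ker (proj K V) := by
      intro q hq u hu
      rw [hu, matLin_col]
      exact Submodule.smul_mem _ _ (single_mem_ker _ hq w)
    rcases hu with h|h|h|h|h|h|h|h <;> subst h
    · exact step (mkP 1 1) (by decide) _
        (three_copy 1 1 1 4 1 5 w (mkP 1 1) rfl (by decide) (by decide) (by decide))
    · exact step (mkP 1 2) (by decide) _
        (three_copy 1 2 2 2 2 5 w (mkP 1 2) rfl (by decide) (by decide) (by decide))
    · exact step (mkP 1 3) (by decide) _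
        (three_copy 1 3 2 3 3 3 w (mkP 1 3) rfl (by decide) (by decide) (by decide))
    · exact step (mkP 1 4) (by decide) _
        (three_copy 1 4 2 4 3 4 w (mkP 1 4) rfl (by decide) (by decide) (by decide))
    · exact step (mkP 1 5) (by decide) _
        (three_copy 1 5 2 5 3 5 w (mkP 1 5) rfl (by decide) (by decide) (by decide))
    · exact step (mkP 2 2) (by decide) _
        (three_copy 1 1 1 2 1 3 w (mkP 2 2) rfl (by decide) (by decide) (by decide))
    · exact step (mkP 2 3) (by decide) _
        (three_copy 2 2 2 3 2 4 w (mkP 2 3) rfl (by decide) (by decide) (by decide))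
    · exact step (mkP 2 4) (by decide) _
        (three_copy 3 3 3 4 3 5 w (mkP 2 4) rfl (by decide) (by decide) (by decide))
  · intro f hf
    rw [← Finset.univ_sum_single f]
    refine Submodule.sum_mem _ fun p _ => ?_
    by_cases hp : Bad p
    · have : f p = 0 := congrFun (LinearMap.mem_ker.mp hf) ⟨p, hp⟩
      rw [this]
      simp
    · -- p is one of the 8 target coordinates
      apply Submodule.subset_span
      have key : ∀ a b c d e g : ℕ,
          colC p.val = [(a,b),(c,d),(e,g)] →
          ((a,b) : ℕ × ℕ) ≠ (c,d) → ((a,b) : ℕ × ℕ) ≠ (e,g) → ((c,d) : ℕ × ℕ) ≠ (e,g) →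
          (copyAt a b ((2:K)⁻¹ • f p) + copyAt c d ((2:K)⁻¹ • f p)
            + copyAt e g ((2:K)⁻¹ • f p) ∈ relSet K V) →
          (Pi.single p (f p) : ParenIdx → TensorPower K 7 V)
            ∈ (matLin (K := K) Bfun) '' relSet K V := by
        intro a b c d e g hcol h1 h2 h3 hmem
        refine ⟨_, hmem, ?_⟩
        rw [three_copy _ _ _ _ _ _ _ _ hcol h1 h2 h3, matLin_col, ← Pi.single_smul,
          smul_smul, mul_inv_cancel₀ (two_ne_zero), one_smul]
      obtain ⟨⟨a, b⟩, h1, h2, h3, h4⟩ := p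
      interval_cases a <;> interval_cases b
      · exact key 1 1 1 4 1 5 rfl (by decide) (by decide) (by decide) ⟨_, Or.inl rfl⟩
      · exact key 1 2 2 2 2 5 rfl (by decide) (by decide) (by decide)
          ⟨_, Or.inr (Or.inl rfl)⟩
      · exact key 1 3 2 3 3 3 rfl (by decide) (by decide) (by decide)
          ⟨_, Or.inr (Or.inr (Or.inl rfl))⟩
      · exact key 1 4 2 4 3 4 rfl (by decide) (by decide) (by decide)
          ⟨_, Or.inr (Or.inr (Or.inr (Or.inl rfl)))⟩
      · exact key 1 5 2 5 3 5 rfl (by decide) (by decide) (by decide)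
          ⟨_, Or.inr (Or.inr (Or.inr (Or.inr (Or.inl rfl))))⟩
      · exact key 1 1 1 2 1 3 rfl (by decide) (by decide) (by decide)
          ⟨_, Or.inr (Or.inr (Or.inr (Or.inr (Or.inr (Or.inl rfl)))))⟩
      · exact key 2 2 2 3 2 4 rfl (by decide) (by decide) (by decide)
          ⟨_, Or.inr (Or.inr (Or.inr (Or.inr (Or.inr (Or.inr (Or.inl rfl))))))⟩
      · exact key 3 3 3 4 3 5 rfl (by decide) (by decide) (by decide)
          ⟨_, Or.inr (Or.inr (Or.inr (Or.inr (Or.inr (Or.inr (Or.inr rfl))))))⟩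
      · exact absurd (Or.inl rfl) hp
      · exact absurd (Or.inr rfl) hp
      · exact absurd (Or.inr rfl) hp
      · exact absurd (Or.inr rfl) hp

end Main

theorem tensorPower_fin (K V : Type*) [Field K] [AddCommGroup V] [Module K V]
    [FiniteDimensional K V] (n : ℕ) :
    FiniteDimensional K (TensorPower K n V) ∧
      Module.finrank K (TensorPower K n V) = Module.finrank K V ^ n := by
  induction n with
  | zero =>
    have e : K ≃ₗ[K] TensorPower K 0 V := TensorPower.algebraMap₀
    exact ⟨Module.Finite.equiv e, by rw [← e.finrank_eq, Module.finrank_self, pow_zero]⟩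
  | succ n ih =>
    have e1 : TensorPower K 1 V ≃ₗ[K] V := PiTensorProduct.subsingletonEquiv 0
    have h1 : FiniteDimensional K (TensorPower K 1 V) := Module.Finite.equiv e1.symm
    have := ih.1
    have e : TensorPower K n V ⊗[K] TensorPower K 1 V ≃ₗ[K] TensorPower K (n+1) V :=
      TensorPower.mulEquiv
    exact ⟨Module.Finite.equiv e,
      by rw [← e.finrank_eq, Module.finrank_tensorProduct, ih.2, e1.finrank_eq, pow_succ]⟩

theorem finrank_degree_seven_component' {K V : Type*} [Field K] [CharZero K]
    [AddCommGroup V] [Module K V] [FiniteDimensional K V]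
    (m : ℕ) (hm : Module.finrank K V = m) (hm1 : 1 ≤ m) :
    Module.finrank K
      ((ParenIdx → TensorPower K 7 V) ⧸ Submodule.span K (relSet K V))
      = 4 * m ^ 7 := by
  haveI hT : FiniteDimensional K (TensorPower K 7 V) := (tensorPower_fin K V 7).1
  have hTr : Module.finrank K (TensorPower K 7 V) = m ^ 7 := by
    rw [(tensorPower_fin K V 7).2, hm]
  -- move the span by the automorphism
  have e1 : ((ParenIdx → TensorPower K 7 V) ⧸ Submodule.span K (relSet K V)) ≃ₗ[K]
      ((ParenIdx → TensorPower K 7 V) ⧸ LinearMap.ker (proj K V)) := by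
    refine Submodule.Quotient.equiv _ _ (matEquiv (K := K)) ?_
    rw [Submodule.map_span]
    exact span_image_eq_ker
  have hsurj : Function.Surjective (proj K V) :=
    LinearMap.funLeft_surjective_of_injective _ _ _ Subtype.val_injective
  have e2 := (proj K V).quotKerEquivOfSurjective hsurj
  rw [e1.finrank_eq, e2.finrank_eq, Module.finrank_pi_fintype, Finset.sum_const,
    Finset.card_univ, show Fintype.card {p : ParenIdx // Bad p} = 4 by decide,
    hTr, smul_eq_mul]


/-- with `W` the direct sum of 12 copies of `V^{⊗7}` indexed by the ternary
parenthesizations of 7 letters and `R₇` the span of the eight families of relations, one has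
`dim (W / R₇) = 4 m⁷` where `m = dim V ≥ 1`. -/
theorem finrank_degree_seven_component {K V : Type*} [Field K] [CharZero K]
    [AddCommGroup V] [Module K V] [FiniteDimensional K V]
    (m : ℕ) (hm : Module.finrank K V = m) (hm1 : 1 ≤ m) :
    Module.finrank K
      ((ParenIdx → TensorPower K 7 V) ⧸
        Submodule.span K
          {v : ParenIdx → TensorPower K 7 V | ∃ w : TensorPower K 7 V,
            v = copyAt 1 1 w + copyAt 1 4 w + copyAt 1 5 w ∨
            v = copyAt 1 2 w + copyAt 2 2 w + copyAt 2 5 w ∨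
            v = copyAt 1 3 w + copyAt 2 3 w + copyAt 3 3 w ∨
            v = copyAt 1 4 w + copyAt 2 4 w + copyAt 3 4 w ∨
            v = copyAt 1 5 w + copyAt 2 5 w + copyAt 3 5 w ∨
            v = copyAt 1 1 w + copyAt 1 2 w + copyAt 1 3 w ∨
            v = copyAt 2 2 w + copyAt 2 3 w + copyAt 2 4 w ∨
            v = copyAt 3 3 w + copyAt 3 4 w + copyAt 3 5 w})
      = 4 * m ^ 7 :=
  finrank_degree_seven_component' m hm hm1
end
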